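/- arXiv:2505.04514 — 6 statements merged into one kernel-verified Lean document; each statement's English description precedes it below -/
import Mathlib

section
/- For every temperature T > 0 and every constraint vector q ∈ ℝ^c for which the feasible set {ρ ∈ D_d : Tr[Q_i ρ] = q_i for all i ∈ [c]} is nonempty, the minimum free energy equals the supremum of the dual chemical potential objective: F_T(Q,q) = sup_{μ ∈ ℝ^c} ( μ·q − T ln Z_T(μ) ). -/
open Matrix MeasureTheory
open scoped ComplexOrder

noncomputable section

/-- A density matrix: a positive semi-definite complex matrix with unit trace. -/
def IsDensityMatrix {n : Type*} [Fintype n] (ρ : Matrix n n ℂ) : Prop :=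
  ρ.PosSemidef ∧ ρ.trace = 1

/-- von Neumann entropy `S(ρ) = -Tr[ρ ln ρ]` via eigenvalues,
with the convention `0 ln 0 = 0` (since `Real.log 0 = 0`). -/
noncomputable def vnEntropy {n : Type*} [Fintype n] [DecidableEq n]
    (ρ : Matrix n n ℂ) : ℝ :=
  if h : ρ.IsHermitian then -∑ i, h.eigenvalues i * Real.log (h.eigenvalues i) else 0

/-- Matrix logarithm via the functional calculus (junk value `0` off Hermitian matrices),
with the convention `log 0 = 0` on eigenvalues. -/
noncomputable def matLog {n : Type*} [Fintype n] [DecidableEq n]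
    (A : Matrix n n ℂ) : Matrix n n ℂ :=
  if h : A.IsHermitian then
    (h.eigenvectorUnitary : Matrix n n ℂ) *
      Matrix.diagonal (fun i => (Real.log (h.eigenvalues i) : ℂ)) *
      star (h.eigenvectorUnitary : Matrix n n ℂ)
  else 0

/-- Real matrix power via the functional calculus (junk value `0` off Hermitian matrices). -/
noncomputable def matRpow {n : Type*} [Fintype n] [DecidableEq n]
    (A : Matrix n n ℂ) (s : ℝ) : Matrix n n ℂ :=
  if h : A.IsHermitian then
    (h.eigenvectorUnitary : Matrix n n ℂ) *
      Matrix.diagonal (fun i => ((h.eigenvalues i ^ s : ℝ) : ℂ)) *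
      star (h.eigenvectorUnitary : Matrix n n ℂ)
  else 0

/-- Operator (spectral) norm of a complex square matrix. -/
noncomputable def opNorm {n : Type*} [Fintype n] [DecidableEq n] (A : Matrix n n ℂ) : ℝ :=
  ‖Matrix.toEuclideanCLM (𝕜 := ℂ) A‖

/-- `μ · Q := ∑ i, μ i • Q i`. -/
def muDotQ {d c : ℕ} (Q : Fin c → Matrix (Fin d) (Fin d) ℂ) (μ : Fin c → ℝ) :
    Matrix (Fin d) (Fin d) ℂ :=
  ∑ i, (μ i : ℂ) • Q i

/-- Partition function `Z_T(μ) = Tr[exp(-(H - μ·Q)/T)]`. -/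
noncomputable def partitionZ {d c : ℕ} (H : Matrix (Fin d) (Fin d) ℂ)
    (Q : Fin c → Matrix (Fin d) (Fin d) ℂ) (T : ℝ) (μ : Fin c → ℝ) : ℝ :=
  (Matrix.trace (NormedSpace.exp ((-(T⁻¹) : ℂ) • (H - muDotQ Q μ)))).re

/-- Thermal state `ρ_T(μ) = exp(-(H - μ·Q)/T) / Z_T(μ)`. -/
noncomputable def thermalState {d c : ℕ} (H : Matrix (Fin d) (Fin d) ℂ)
    (Q : Fin c → Matrix (Fin d) (Fin d) ℂ) (T : ℝ) (μ : Fin c → ℝ) :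
    Matrix (Fin d) (Fin d) ℂ :=
  ((partitionZ H Q T μ : ℂ))⁻¹ • NormedSpace.exp ((-(T⁻¹) : ℂ) • (H - muDotQ Q μ))

/-- Umegaki relative entropy `D(ω‖τ) = Tr[ω (ln ω − ln τ)]`. -/
noncomputable def relEntropy {n : Type*} [Fintype n] [DecidableEq n]
    (ω τ : Matrix n n ℂ) : ℝ :=
  (Matrix.trace (ω * (matLog ω - matLog τ))).re

end

section scalarlemmas

lemma sd_log_ineq {p r : ℝ} (hp : 0 ≤ p) (hr : 0 ≤ r) (h0 : r = 0 → p = 0) :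
    p - r ≤ p * Real.log p - p * Real.log r := by
  rcases eq_or_lt_of_le hp with h | hp'
  · simp [← h, neg_nonpos, hr]
  · have hr' : 0 < r := by
      rcases eq_or_lt_of_le hr with h | h
      · exact absurd (h0 h.symm) (by positivity)
      · exact h
    have h1 : Real.log (r / p) ≤ r / p - 1 := Real.log_le_sub_one_of_pos (by positivity)
    have h2 : Real.log (r / p) = Real.log r - Real.log p := Real.log_div (ne_of_gt hr') (ne_of_gt hp')
    have h3 : p * Real.log (r / p) ≤ r - p := by
      have h4 := mul_le_mul_of_nonneg_left h1 hp
      have hpr : p * (r / p - 1) = r - p := by field_simp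
      linarith
    rw [h2, mul_sub] at h3
    linarith

lemma sd_jensen_log {d : ℕ} (w g : Fin d → ℝ) (hw : ∀ j, 0 ≤ w j) (hw1 : ∑ j, w j = 1)
    (hg : ∀ j, 0 ≤ g j) (hker : ∀ j, g j = 0 → w j = 0) :
    ∑ j, w j * Real.log (g j) ≤ Real.log (∑ j, w j * g j) := by
  classical
  set t : Finset (Fin d) := Finset.univ.filter (fun j => g j ≠ 0) with ht
  have hsum_t : ∑ j ∈ t, w j = 1 := by
    rw [← hw1]
    refine Finset.sum_subset (Finset.filter_subset _ _) ?_
    intro j _ hj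
    simp only [ht, Finset.mem_filter, Finset.mem_univ, true_and, not_not] at hj
    exact hker j hj
  have hjen := (strictConcaveOn_log_Ioi.concaveOn).le_map_sum
    (t := t) (w := w) (p := g) (fun j _ => hw j) hsum_t
    (fun j hj => by
      simp only [ht, Finset.mem_filter] at hj
      exact lt_of_le_of_ne (hg j) (Ne.symm hj.2))
  simp only [smul_eq_mul] at hjen
  have e1 : ∑ j, w j * Real.log (g j) = ∑ j ∈ t, w j * Real.log (g j) := by
    refine (Finset.sum_subset (Finset.filter_subset _ _) ?_).symm
    intro j _ hj
    simp only [ht, Finset.mem_filter, Finset.mem_univ, true_and, not_not] at hj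
    simp [hker j hj]
  have e2 : ∑ j, w j * g j = ∑ j ∈ t, w j * g j := by
    refine (Finset.sum_subset (Finset.filter_subset _ _) ?_).symm
    intro j _ hj
    simp only [ht, Finset.mem_filter, Finset.mem_univ, true_and, not_not] at hj
    simp [hj]
  rw [e1, e2]
  exact hjen

lemma sd_klein_sum {d : ℕ} (p g : Fin d → ℝ) (cM : Fin d → Fin d → ℝ)
    (hp : ∀ i, 0 ≤ p i) (hps : ∑ i, p i = 1)
    (hg : ∀ j, 0 ≤ g j) (hgs : ∑ j, g j ≤ 1)
    (hc : ∀ i j, 0 ≤ cM i j) (hrow : ∀ i, ∑ j, cM i j = 1) (hcol : ∀ j, ∑ i, cM i j = 1)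
    (hker : ∀ i j, g j = 0 → p i * cM i j = 0) :
    ∑ i, ∑ j, p i * (cM i j * Real.log (g j)) ≤ ∑ i, p i * Real.log (p i) := by
  classical
  set r : Fin d → ℝ := fun i => ∑ j, cM i j * g j with hrdef
  have hr0 : ∀ i, 0 ≤ r i := fun i => Finset.sum_nonneg fun j _ => mul_nonneg (hc i j) (hg j)
  have hrs : ∑ i, r i ≤ 1 := by
    have : ∑ i, r i = ∑ j, (∑ i, cM i j) * g j := by
      rw [Finset.sum_comm (f := fun i j => cM i j * g j)]
      simp [Finset.sum_mul]
    rw [this]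
    simpa [hcol] using hgs
  have key : ∀ i, p i * (∑ j, cM i j * Real.log (g j)) ≤ p i * Real.log (p i) - (p i - r i) := by
    intro i
    rcases eq_or_lt_of_le (hp i) with h | hpi
    · have : r i - 0 * Real.log 0 + 0 * Real.log 0 = r i := by ring
      simp [← h, hr0 i]
    · have hkeri : ∀ j, g j = 0 → cM i j = 0 := by
        intro j hj
        have := hker i j hj
        rcases mul_eq_zero.1 this with h | h
        · exact absurd h (ne_of_gt hpi)
        · exact h
      have hri : 0 < r i := by
        rcases eq_or_lt_of_le (hr0 i) with h | h
        · exfalso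
          have hall : ∀ j ∈ Finset.univ, cM i j * g j = 0 :=
            (Finset.sum_eq_zero_iff_of_nonneg (fun j _ => mul_nonneg (hc i j) (hg j))).1 h.symm
          have : ∑ j, cM i j = 0 := by
            refine Finset.sum_eq_zero fun j _ => ?_
            rcases mul_eq_zero.1 (hall j (Finset.mem_univ j)) with h' | h'
            · exact h'
            · exact hkeri j h'
          rw [hrow i] at this; norm_num at this
        · exact h
      have hjen := sd_jensen_log (fun j => cM i j) g (hc i) (hrow i) hg hkeri
      have h1 : p i * (∑ j, cM i j * Real.log (g j)) ≤ p i * Real.log (r i) :=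
        mul_le_mul_of_nonneg_left hjen (hp i)
      have h2 : p i - r i ≤ p i * Real.log (p i) - p i * Real.log (r i) :=
        sd_log_ineq (hp i) (hr0 i) (fun h => absurd h hri.ne')
      linarith
  calc ∑ i, ∑ j, p i * (cM i j * Real.log (g j))
      = ∑ i, p i * (∑ j, cM i j * Real.log (g j)) := by simp [Finset.mul_sum]
    _ ≤ ∑ i, (p i * Real.log (p i) - (p i - r i)) := Finset.sum_le_sum fun i _ => key i
    _ = ∑ i, p i * Real.log (p i) - (∑ i, p i) + ∑ i, r i := by
        rw [Finset.sum_sub_distrib, Finset.sum_sub_distrib]; ring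
    _ ≤ ∑ i, p i * Real.log (p i) := by rw [hps]; linarith

end scalarlemmas

section matrixlemmas
variable {d : ℕ}

lemma sd_conj_diag_entry (N : Matrix (Fin d) (Fin d) ℂ) (p : Fin d → ℝ) (j : Fin d) :
    (star N * Matrix.diagonal (fun i => (p i : ℂ)) * N) j j
      = ∑ i, ((p i : ℂ) * (Complex.normSq (N i j) : ℂ)) := by
  rw [Matrix.star_eq_conjTranspose]
  simp only [Matrix.mul_apply, Matrix.diagonal_apply, Matrix.conjTranspose_apply,
    mul_ite, mul_zero, ite_mul, zero_mul, Finset.sum_ite_eq, Finset.sum_ite_eq',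
    Finset.mem_univ, if_true]
  refine Finset.sum_congr rfl fun k _ => ?_
  simp only [Complex.star_def]
  rw [show (starRingEnd ℂ) (N k j) * (p k : ℂ) * N k j
      = (p k : ℂ) * ((starRingEnd ℂ) (N k j) * N k j) from by ring,
    ← Complex.normSq_eq_conj_mul_self]

lemma sd_unit_row_sums (N : Matrix (Fin d) (Fin d) ℂ) (h : N * star N = 1) (i : Fin d) :
    ∑ j, Complex.normSq (N i j) = 1 := by
  have h1 : (N * star N) i i = 1 := by rw [h]; simp
  rw [Matrix.star_eq_conjTranspose, Matrix.mul_apply] at h1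
  simp only [Matrix.conjTranspose_apply] at h1
  have h2 : ∑ j, ((Complex.normSq (N i j) : ℂ)) = 1 := by
    rw [← h1]
    exact Finset.sum_congr rfl fun k _ => by
      simp [Complex.star_def, Complex.mul_conj]
  have := congrArg Complex.re h2
  simpa using this

lemma sd_unit_col_sums (N : Matrix (Fin d) (Fin d) ℂ) (h : star N * N = 1) (j : Fin d) :
    ∑ i, Complex.normSq (N i j) = 1 := by
  have h1 : (star N * N) j j = 1 := by rw [h]; simp
  rw [Matrix.star_eq_conjTranspose, Matrix.mul_apply] at h1
  simp only [Matrix.conjTranspose_apply] at h1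
  have h2 : ∑ i, ((Complex.normSq (N i j) : ℂ)) = 1 := by
    rw [← h1]
    exact Finset.sum_congr rfl fun k _ => by
      simp [Complex.star_def, Complex.normSq_eq_conj_mul_self]
  have := congrArg Complex.re h2
  simpa using this

lemma sd_klein_master (ρ V W : Matrix (Fin d) (Fin d) ℂ) (p g : Fin d → ℝ)
    (hV1 : star V * V = 1) (hV2 : V * star V = 1)
    (hW1 : star W * W = 1) (hW2 : W * star W = 1)
    (hρ : ρ = V * Matrix.diagonal (fun i => (p i : ℂ)) * star V)
    (hp : ∀ i, 0 ≤ p i) (hps : ∑ i, p i = 1)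
    (hg : ∀ j, 0 ≤ g j) (hgs : ∑ j, g j ≤ 1)
    (hker : ∀ j, g j = 0 → (star W * ρ * W) j j = 0) :
    ∑ j, ((star W * ρ * W) j j).re * Real.log (g j) ≤ ∑ i, p i * Real.log (p i) := by
  classical
  set N : Matrix (Fin d) (Fin d) ℂ := star V * W with hN
  have hstarN : star N = star W * V := by rw [hN, StarMul.star_mul, star_star]
  have hNs1 : star N * N = 1 := by
    rw [hstarN, hN]
    calc star W * V * (star V * W) = star W * (V * star V) * W := by
          simp only [Matrix.mul_assoc]
      _ = 1 := by rw [hV2, Matrix.mul_one, hW1]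
  have hNs2 : N * star N = 1 := by
    rw [hstarN, hN]
    calc star V * W * (star W * V) = star V * (W * star W) * V := by
          simp only [Matrix.mul_assoc]
      _ = 1 := by rw [hW2, Matrix.mul_one, hV1]
  have hentry : ∀ j, (star W * ρ * W) j j = ∑ i, ((p i : ℂ) * (Complex.normSq (N i j) : ℂ)) := by
    intro j
    have e : star W * ρ * W = star N * Matrix.diagonal (fun i => (p i : ℂ)) * N := by
      rw [hρ, hstarN, hN]
      simp only [Matrix.mul_assoc]
    rw [e]
    exact sd_conj_diag_entry N p j
  set cM : Fin d → Fin d → ℝ := fun i j => Complex.normSq (N i j) with hcM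
  have hentry_re : ∀ j, ((star W * ρ * W) j j).re = ∑ i, p i * cM i j := by
    intro j
    rw [hentry j, Complex.re_sum]
    exact Finset.sum_congr rfl fun i _ => by simp [hcM]
  have hker' : ∀ i j, g j = 0 → p i * cM i j = 0 := by
    intro i j hgj
    have h0 : ((star W * ρ * W) j j).re = 0 := by rw [hker j hgj]; simp
    rw [hentry_re j] at h0
    have h1 : ∀ k ∈ Finset.univ, p k * cM k j = 0 :=
      (Finset.sum_eq_zero_iff_of_nonneg (fun k _ =>
        mul_nonneg (hp k) (Complex.normSq_nonneg _))).1 h0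
    exact h1 i (Finset.mem_univ i)
  have swap : ∑ j, ((star W * ρ * W) j j).re * Real.log (g j)
      = ∑ i, ∑ j, p i * (cM i j * Real.log (g j)) := by
    rw [Finset.sum_comm (f := fun i j => p i * (cM i j * Real.log (g j)))]
    refine Finset.sum_congr rfl fun j _ => ?_
    rw [hentry_re j, Finset.sum_mul]
    exact Finset.sum_congr rfl fun i _ => by ring
  rw [swap]
  exact sd_klein_sum p g cM hp hps hg hgs (fun i j => Complex.normSq_nonneg _)
    (fun i => sd_unit_row_sums N hNs2 i) (fun j => sd_unit_col_sums N hNs1 j) hker'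

end matrixlemmas

section speclemmas
variable {d : ℕ}

lemma sd_trace_conj (V : Matrix (Fin d) (Fin d) ℂ) (hV1 : star V * V = 1)
    (f : Fin d → ℂ) : (V * Matrix.diagonal f * star V).trace = ∑ i, f i := by
  rw [Matrix.trace_mul_cycle, hV1, Matrix.one_mul, Matrix.trace_diagonal]

lemma sd_conj_mul (V : Matrix (Fin d) (Fin d) ℂ) (hV1 : star V * V = 1)
    (a b : Fin d → ℂ) :
    (V * Matrix.diagonal a * star V) * (V * Matrix.diagonal b * star V)
      = V * Matrix.diagonal (fun i => a i * b i) * star V := by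
  have h : Matrix.diagonal a * (star V * V) * Matrix.diagonal b
      = Matrix.diagonal (fun i => a i * b i) := by
    rw [hV1, Matrix.mul_one, Matrix.diagonal_mul_diagonal]
  calc (V * Matrix.diagonal a * star V) * (V * Matrix.diagonal b * star V)
      = V * (Matrix.diagonal a * (star V * V) * Matrix.diagonal b) * star V := by
        simp only [Matrix.mul_assoc]
    _ = V * Matrix.diagonal (fun i => a i * b i) * star V := by rw [h]

lemma sd_upair (u : Matrix.unitaryGroup (Fin d) ℂ) :
    star (u : Matrix (Fin d) (Fin d) ℂ) * u = 1 ∧ (u : Matrix (Fin d) (Fin d) ℂ) * star u = 1 :=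
  ⟨Unitary.star_mul_self_of_mem u.2, Unitary.mul_star_self_of_mem u.2⟩

lemma sd_spectral {A : Matrix (Fin d) (Fin d) ℂ} (hA : A.IsHermitian) :
    A = (hA.eigenvectorUnitary : Matrix (Fin d) (Fin d) ℂ)
        * Matrix.diagonal (fun i => (hA.eigenvalues i : ℂ))
        * star (hA.eigenvectorUnitary : Matrix (Fin d) (Fin d) ℂ) :=
  hA.spectral_theorem

lemma sd_trace_eq_sum_eig {A : Matrix (Fin d) (Fin d) ℂ} (hA : A.IsHermitian) :
    A.trace = ((∑ i, hA.eigenvalues i : ℝ) : ℂ) := by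
  conv_lhs => rw [sd_spectral hA]
  rw [sd_trace_conj _ (sd_upair _).1]
  push_cast
  rfl

lemma sd_density_eigen {ρ : Matrix (Fin d) (Fin d) ℂ} (hρ : IsDensityMatrix ρ) :
    (∀ i, 0 ≤ (hρ.1.1).eigenvalues i) ∧ ∑ i, (hρ.1.1).eigenvalues i = 1 := by
  refine ⟨fun i => hρ.1.eigenvalues_nonneg i, ?_⟩
  have h := sd_trace_eq_sum_eig hρ.1.1
  have h2 : ((∑ i, (hρ.1.1).eigenvalues i : ℝ) : ℂ) = 1 := by rw [← h, hρ.2]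
  exact_mod_cast h2

lemma sd_vnEntropy_eq {ρ : Matrix (Fin d) (Fin d) ℂ} (hρ : ρ.IsHermitian) :
    vnEntropy ρ = -∑ i, hρ.eigenvalues i * Real.log (hρ.eigenvalues i) := by
  rw [vnEntropy, dif_pos hρ]

lemma sd_klein_density (ρ W : Matrix (Fin d) (Fin d) ℂ) (g : Fin d → ℝ)
    (hρ : IsDensityMatrix ρ) (hW1 : star W * W = 1) (hW2 : W * star W = 1)
    (hg : ∀ j, 0 ≤ g j) (hgs : ∑ j, g j ≤ 1)
    (hker : ∀ j, g j = 0 → (star W * ρ * W) j j = 0) :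
    ∑ j, ((star W * ρ * W) j j).re * Real.log (g j) ≤ -vnEntropy ρ := by
  have hH := hρ.1.1
  rw [sd_vnEntropy_eq hH, neg_neg]
  exact sd_klein_master ρ _ W _ g (sd_upair _).1 (sd_upair _).2 hW1 hW2
    (sd_spectral hH) (sd_density_eigen hρ).1 (sd_density_eigen hρ).2 hg hgs hker

lemma sd_exp_spec {A : Matrix (Fin d) (Fin d) ℂ} (hA : A.IsHermitian) (t : ℝ) :
    NormedSpace.exp ((t : ℂ) • A)
      = (hA.eigenvectorUnitary : Matrix (Fin d) (Fin d) ℂ)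
        * Matrix.diagonal (fun i => (Real.exp (t * hA.eigenvalues i) : ℂ))
        * star (hA.eigenvectorUnitary : Matrix (Fin d) (Fin d) ℂ) := by
  set V : Matrix (Fin d) (Fin d) ℂ := (hA.eigenvectorUnitary : Matrix (Fin d) (Fin d) ℂ) with hV
  have hV1 : star V * V = 1 := (sd_upair _).1
  have hV2 : V * star V = 1 := (sd_upair _).2
  have hinv : V⁻¹ = star V := Matrix.inv_eq_left_inv hV1
  have hunit : IsUnit V := ⟨⟨V, star V, hV2, hV1⟩, rfl⟩
  have hsm : (t : ℂ) • A = V * ((t : ℂ) • Matrix.diagonal (fun i => (hA.eigenvalues i : ℂ))) * star V := by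
    conv_lhs => rw [sd_spectral hA]
    simp only [Matrix.mul_smul, Matrix.smul_mul]
    rfl
  rw [hsm, ← hinv, Matrix.exp_conj V _ hunit, hinv]
  congr 2
  rw [show (t : ℂ) • (Matrix.diagonal fun i => (hA.eigenvalues i : ℂ))
      = Matrix.diagonal (fun i => ((t : ℂ) * (hA.eigenvalues i : ℂ))) from by
    rw [← Matrix.diagonal_smul]; congr 1]
  rw [Matrix.exp_diagonal, Pi.exp_def, ← Complex.exp_eq_exp_ℂ]
  rw [show (fun i => Complex.exp ((t : ℂ) * (hA.eigenvalues i : ℂ)))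
      = fun i => ((Real.exp (t * hA.eigenvalues i) : ℝ) : ℂ) from by
    funext i
    rw [← Complex.ofReal_mul]
    exact (Complex.ofReal_exp _).symm]

end speclemmas



section gibbslayer
variable {d : ℕ}

lemma sd_trace_diagonal_mul (v : Fin d → ℂ) (M : Matrix (Fin d) (Fin d) ℂ) :
    (Matrix.diagonal v * M).trace = ∑ i, v i * M i i := by
  simp [Matrix.trace, Matrix.diag, Matrix.mul_apply, Matrix.diagonal_apply, ite_mul, zero_mul,
    Finset.sum_ite_eq, Finset.sum_ite_eq']

lemma sd_conj_recover (V : Matrix (Fin d) (Fin d) ℂ) (hV1 : star V * V = 1)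
    (D : Matrix (Fin d) (Fin d) ℂ) : star V * (V * D * star V) * V = D := by
  calc star V * (V * D * star V) * V = (star V * V) * D * (star V * V) := by
        simp only [Matrix.mul_assoc]
    _ = D := by rw [hV1, Matrix.one_mul, Matrix.mul_one]

lemma sd_trace_A_mul {A : Matrix (Fin d) (Fin d) ℂ} (hA : A.IsHermitian)
    (ρ : Matrix (Fin d) (Fin d) ℂ) :
    (A * ρ).trace = ∑ j, (hA.eigenvalues j : ℂ)
      * ((star (hA.eigenvectorUnitary : Matrix (Fin d) (Fin d) ℂ) * ρ
          * (hA.eigenvectorUnitary : Matrix (Fin d) (Fin d) ℂ)) j j) := by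
  have e : A * ρ = (hA.eigenvectorUnitary : Matrix (Fin d) (Fin d) ℂ)
      * (Matrix.diagonal (fun i => (hA.eigenvalues i : ℂ))
        * (star (hA.eigenvectorUnitary : Matrix (Fin d) (Fin d) ℂ) * ρ)) := by
    conv_lhs => rw [sd_spectral hA]
    simp only [Matrix.mul_assoc]
  rw [e, Matrix.trace_mul_comm, Matrix.mul_assoc, sd_trace_diagonal_mul]

lemma sd_trace_conj_inner (W ρ : Matrix (Fin d) (Fin d) ℂ) (hW2 : W * star W = 1) :
    (star W * ρ * W).trace = ρ.trace := by
  rw [Matrix.trace_mul_cycle, hW2, Matrix.one_mul]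

lemma sd_trace_eq_sum_diag (M : Matrix (Fin d) (Fin d) ℂ) : M.trace = ∑ i, M i i := rfl

lemma sd_gibbs_ineq {A : Matrix (Fin d) (Fin d) ℂ} (hA : A.IsHermitian) {T : ℝ} (hT : 0 < T)
    (hd : 0 < d) {ρ : Matrix (Fin d) (Fin d) ℂ} (hρ : IsDensityMatrix ρ) :
    -(T * Real.log ((NormedSpace.exp ((-(T⁻¹) : ℂ) • A)).trace.re))
      ≤ ((A * ρ).trace).re - T * vnEntropy ρ := by
  classical
  set W : Matrix (Fin d) (Fin d) ℂ := (hA.eigenvectorUnitary : Matrix (Fin d) (Fin d) ℂ) with hW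
  have hW1 : star W * W = 1 := (sd_upair _).1
  have hW2 : W * star W = 1 := (sd_upair _).2
  set a : Fin d → ℝ := hA.eigenvalues with ha
  set Z : ℝ := ∑ i, Real.exp (-T⁻¹ * a i) with hZ
  have hZpos : 0 < Z := by
    rw [hZ]
    have : Nonempty (Fin d) := ⟨⟨0, hd⟩⟩
    exact Finset.sum_pos (fun i _ => Real.exp_pos _) Finset.univ_nonempty
  have hZtr : (NormedSpace.exp ((-(T⁻¹) : ℂ) • A)).trace.re = Z := by
    have h1 : ((-(T⁻¹) : ℂ)) = ((-T⁻¹ : ℝ) : ℂ) := by push_cast; ring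
    rw [h1, sd_exp_spec hA (-T⁻¹), sd_trace_conj _ hW1]
    rw [show (∑ i, ((Real.exp (-T⁻¹ * a i) : ℝ) : ℂ)) = ((Z : ℝ) : ℂ) from by rw [hZ]; push_cast; rfl]
    simp
  rw [hZtr]
  set g : Fin d → ℝ := fun i => Real.exp (-T⁻¹ * a i) / Z with hg
  have hgpos : ∀ j, 0 < g j := fun j => div_pos (Real.exp_pos _) hZpos
  have hgsum : ∑ j, g j = 1 := by
    rw [hg, ← Finset.sum_div, ← hZ, div_self hZpos.ne']
  have hlog : ∀ j, Real.log (g j) = -T⁻¹ * a j - Real.log Z := by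
    intro j
    rw [hg, Real.log_div (Real.exp_pos _).ne' hZpos.ne', Real.log_exp]
  have hklein := sd_klein_density ρ W g hρ hW1 hW2 (fun j => (hgpos j).le) hgsum.le
    (fun j h => absurd h (hgpos j).ne')
  set cc : Fin d → ℝ := fun j => ((star W * ρ * W) j j).re with hcc
  have htrA : ((A * ρ).trace).re = ∑ j, a j * cc j := by
    rw [sd_trace_A_mul hA ρ, Complex.re_sum]
    exact Finset.sum_congr rfl fun j _ => by
      rw [show ((a j : ℂ) * ((star W * ρ * W) j j)) = (a j : ℝ) • ((star W * ρ * W) j j) from by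
        simp [Complex.real_smul]]
      simp [Complex.smul_re, hcc]
  have hsum1 : ∑ j, cc j = 1 := by
    have h1 : (star W * ρ * W).trace = 1 := by rw [sd_trace_conj_inner W ρ hW2, hρ.2]
    have h2 := congrArg Complex.re h1
    rw [sd_trace_eq_sum_diag, Complex.re_sum] at h2
    simpa using h2
  have hexp : ∑ j, cc j * Real.log (g j) = -T⁻¹ * ((A * ρ).trace).re - Real.log Z := by
    calc ∑ j, cc j * Real.log (g j) = ∑ j, (-T⁻¹ * (a j * cc j) - Real.log Z * cc j) := by
          refine Finset.sum_congr rfl fun j _ => ?_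
          rw [hlog j]; ring
      _ = -T⁻¹ * (∑ j, a j * cc j) - Real.log Z * (∑ j, cc j) := by
          rw [Finset.sum_sub_distrib, ← Finset.mul_sum, ← Finset.mul_sum]
      _ = -T⁻¹ * ((A * ρ).trace).re - Real.log Z := by rw [htrA, hsum1, mul_one]
  rw [hexp] at hklein
  have h3 := mul_le_mul_of_nonneg_left hklein hT.le
  have h4 : T * (-T⁻¹ * ((A * ρ).trace).re - Real.log Z)
      = -((A * ρ).trace).re - T * Real.log Z := by
    field_simp
  rw [h4] at h3
  linarith

end gibbslayer


section thermallayer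
variable {d : ℕ}

lemma sd_density_of_conj (V : Matrix (Fin d) (Fin d) ℂ) (hV1 : star V * V = 1)
    (f : Fin d → ℝ) (hf : ∀ i, 0 ≤ f i) (hfs : ∑ i, f i = 1) :
    IsDensityMatrix (V * Matrix.diagonal (fun i => (f i : ℂ)) * star V) := by
  constructor
  · have hD : (Matrix.diagonal (fun i => (f i : ℂ))).PosSemidef :=
      Matrix.posSemidef_diagonal_iff.2 fun i => by exact_mod_cast hf i
    have := hD.mul_mul_conjTranspose_same V
    rwa [← Matrix.star_eq_conjTranspose] at this
  · rw [sd_trace_conj V hV1]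
    rw [show (∑ i, ((f i : ℝ) : ℂ)) = ((∑ i, f i : ℝ) : ℂ) from by push_cast; rfl, hfs]
    simp

lemma sd_entropy_of_conj (V : Matrix (Fin d) (Fin d) ℂ) (hV1 : star V * V = 1)
    (hV2 : V * star V = 1) (f : Fin d → ℝ) (hf : ∀ i, 0 ≤ f i) (hfs : ∑ i, f i = 1) :
    vnEntropy (V * Matrix.diagonal (fun i => (f i : ℂ)) * star V)
      = -∑ i, f i * Real.log (f i) := by
  set ρ := V * Matrix.diagonal (fun i => (f i : ℂ)) * star V with hρdef
  have hρd : IsDensityMatrix ρ := sd_density_of_conj V hV1 f hf hfs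
  have hH : ρ.IsHermitian := hρd.1.1
  set W : Matrix (Fin d) (Fin d) ℂ := (hH.eigenvectorUnitary : Matrix (Fin d) (Fin d) ℂ) with hWd
  have hW1 : star W * W = 1 := (sd_upair _).1
  have hW2 : W * star W = 1 := (sd_upair _).2
  have hdiagW : star W * ρ * W = Matrix.diagonal (fun i => (hH.eigenvalues i : ℂ)) :=
    by have := hH.conjStarAlgAut_star_eigenvectorUnitary; rw [Unitary.conjStarAlgAut_star_apply] at this; exact this
  have hdiagV : star V * ρ * V = Matrix.diagonal (fun i => (f i : ℂ)) := by
    rw [hρdef, sd_conj_recover V hV1]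
  have hl0 := (sd_density_eigen hρd).1
  have hls := (sd_density_eigen hρd).2
  have h1 : ∑ j, hH.eigenvalues j * Real.log (hH.eigenvalues j)
      ≤ ∑ i, f i * Real.log (f i) := by
    have hk := sd_klein_master ρ V W f (hH.eigenvalues) hV1 hV2 hW1 hW2 hρdef hf hfs
      hl0 hls.le (fun j hj => by rw [hdiagW]; simp [hj])
    calc ∑ j, hH.eigenvalues j * Real.log (hH.eigenvalues j)
        = ∑ j, ((star W * ρ * W) j j).re * Real.log (hH.eigenvalues j) := by
          refine Finset.sum_congr rfl fun j _ => ?_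
          rw [hdiagW]; simp
      _ ≤ ∑ i, f i * Real.log (f i) := hk
  have h2 : ∑ i, f i * Real.log (f i)
      ≤ ∑ j, hH.eigenvalues j * Real.log (hH.eigenvalues j) := by
    have hk := sd_klein_master ρ W V (hH.eigenvalues) f hW1 hW2 hV1 hV2 (sd_spectral hH)
      hl0 hls hf hfs.le (fun j hj => by rw [hdiagV]; simp [hj])
    calc ∑ i, f i * Real.log (f i)
        = ∑ j, ((star V * ρ * V) j j).re * Real.log (f j) := by
          refine Finset.sum_congr rfl fun j _ => ?_
          rw [hdiagV]; simp
      _ ≤ _ := hk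
  rw [sd_vnEntropy_eq hH, le_antisymm h1 h2]

lemma sd_thermal_exists {A : Matrix (Fin d) (Fin d) ℂ} (hA : A.IsHermitian) {T : ℝ}
    (hT : 0 < T) (hd : 0 < d) :
    ∃ τ : Matrix (Fin d) (Fin d) ℂ, IsDensityMatrix τ ∧
      ((A * τ).trace).re - T * vnEntropy τ
        = -(T * Real.log ((NormedSpace.exp ((-(T⁻¹) : ℂ) • A)).trace.re)) := by
  classical
  set V : Matrix (Fin d) (Fin d) ℂ := (hA.eigenvectorUnitary : Matrix (Fin d) (Fin d) ℂ) with hV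
  have hV1 : star V * V = 1 := (sd_upair _).1
  have hV2 : V * star V = 1 := (sd_upair _).2
  set a : Fin d → ℝ := hA.eigenvalues with ha
  set Z : ℝ := ∑ i, Real.exp (-T⁻¹ * a i) with hZ
  have hZpos : 0 < Z := by
    rw [hZ]
    have : Nonempty (Fin d) := ⟨⟨0, hd⟩⟩
    exact Finset.sum_pos (fun i _ => Real.exp_pos _) Finset.univ_nonempty
  have hZtr : (NormedSpace.exp ((-(T⁻¹) : ℂ) • A)).trace.re = Z := by
    have h1 : ((-(T⁻¹) : ℂ)) = ((-T⁻¹ : ℝ) : ℂ) := by push_cast; ring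
    rw [h1, sd_exp_spec hA (-T⁻¹), sd_trace_conj _ hV1]
    rw [show (∑ i, ((Real.exp (-T⁻¹ * a i) : ℝ) : ℂ)) = ((Z : ℝ) : ℂ) from by
      rw [hZ]; push_cast; rfl]
    simp
  rw [hZtr]
  set g : Fin d → ℝ := fun i => Real.exp (-T⁻¹ * a i) / Z with hg
  have hgpos : ∀ j, 0 < g j := fun j => div_pos (Real.exp_pos _) hZpos
  have hgsum : ∑ j, g j = 1 := by
    rw [hg, ← Finset.sum_div, ← hZ, div_self hZpos.ne']
  have hlog : ∀ j, Real.log (g j) = -T⁻¹ * a j - Real.log Z := by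
    intro j
    rw [hg, Real.log_div (Real.exp_pos _).ne' hZpos.ne', Real.log_exp]
  refine ⟨V * Matrix.diagonal (fun i => (g i : ℂ)) * star V,
    sd_density_of_conj V hV1 g (fun j => (hgpos j).le) hgsum, ?_⟩
  have htr : (A * (V * Matrix.diagonal (fun i => (g i : ℂ)) * star V)).trace
      = ((∑ i, a i * g i : ℝ) : ℂ) := by
    conv_lhs => rw [sd_spectral hA]
    rw [show (Matrix.diagonal fun i => (hA.eigenvalues i : ℂ)) = Matrix.diagonal fun i => (a i : ℂ)
      from rfl]
    rw [sd_conj_mul V hV1, sd_trace_conj V hV1]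
    push_cast
    rfl
  rw [htr, sd_entropy_of_conj V hV1 hV2 g (fun j => (hgpos j).le) hgsum]
  rw [show ∑ i, g i * Real.log (g i) = -T⁻¹ * (∑ i, a i * g i) - Real.log Z from by
    calc ∑ i, g i * Real.log (g i) = ∑ i, (-T⁻¹ * (a i * g i) - Real.log Z * g i) := by
          refine Finset.sum_congr rfl fun i _ => ?_
          rw [hlog i]; ring
      _ = -T⁻¹ * (∑ i, a i * g i) - Real.log Z * (∑ i, g i) := by
          rw [Finset.sum_sub_distrib, ← Finset.mul_sum, ← Finset.mul_sum]
      _ = -T⁻¹ * (∑ i, a i * g i) - Real.log Z := by rw [hgsum, mul_one]]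
  have hre : ((((∑ i, a i * g i : ℝ)) : ℂ)).re = ∑ i, a i * g i := by simp
  rw [hre]
  field_simp
  ring

end thermallayer


section topologylayer
variable {d : ℕ}

lemma sd_cont_entry (k l : Fin d) : Continuous fun ρ : Matrix (Fin d) (Fin d) ℂ => ρ k l :=
  (continuous_apply l).comp (continuous_apply k)

lemma sd_cont_conj_entry (B C : Matrix (Fin d) (Fin d) ℂ) (j : Fin d) :
    Continuous fun ρ : Matrix (Fin d) (Fin d) ℂ => (B * ρ * C) j j := by
  have h : (fun ρ : Matrix (Fin d) (Fin d) ℂ => (B * ρ * C) j j)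
      = fun ρ => ∑ l, (∑ k, B j k * ρ k l) * C l j := by
    funext ρ
    simp [Matrix.mul_apply]
  rw [h]
  exact continuous_finset_sum _ fun l _ =>
    (continuous_finset_sum _ fun k _ => continuous_const.mul (sd_cont_entry k l)).mul
      continuous_const

lemma sd_cont_trace_mul (B : Matrix (Fin d) (Fin d) ℂ) :
    Continuous fun ρ : Matrix (Fin d) (Fin d) ℂ => ((B * ρ).trace).re := by
  have h : (fun ρ : Matrix (Fin d) (Fin d) ℂ => ((B * ρ).trace).re)
      = fun ρ => (∑ i, ∑ k, B i k * ρ k i).re := by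
    funext ρ
    simp [Matrix.trace, Matrix.diag, Matrix.mul_apply]
  rw [h]
  exact Complex.continuous_re.comp (continuous_finset_sum _ fun i _ =>
    continuous_finset_sum _ fun k _ => continuous_const.mul (sd_cont_entry k i))

lemma sd_density_closed : IsClosed {ρ : Matrix (Fin d) (Fin d) ℂ | IsDensityMatrix ρ} := by
  have h1 : IsClosed {ρ : Matrix (Fin d) (Fin d) ℂ | ρ.IsHermitian} := by
    have he : {ρ : Matrix (Fin d) (Fin d) ℂ | ρ.IsHermitian} = {ρ | ρᴴ = ρ} := rfl
    rw [he]
    refine isClosed_eq ?_ continuous_id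
    exact continuous_pi fun i => continuous_pi fun j =>
      continuous_star.comp (sd_cont_entry j i)
  have h2 : IsClosed {ρ : Matrix (Fin d) (Fin d) ℂ |
      ∀ x : Fin d → ℂ, 0 ≤ dotProduct (star x) (ρ *ᵥ x)} := by
    have he : {ρ : Matrix (Fin d) (Fin d) ℂ | ∀ x : Fin d → ℂ, 0 ≤ dotProduct (star x) (ρ *ᵥ x)}
        = ⋂ x : Fin d → ℂ, {ρ | 0 ≤ dotProduct (star x) (ρ *ᵥ x)} := by
      ext ρ; simp
    rw [he]
    refine isClosed_iInter fun x => ?_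
    have hc : Continuous fun ρ : Matrix (Fin d) (Fin d) ℂ => dotProduct (star x) (ρ *ᵥ x) := by
      have he2 : (fun ρ : Matrix (Fin d) (Fin d) ℂ => dotProduct (star x) (ρ *ᵥ x))
          = fun ρ => ∑ i, star (x i) * ∑ j, ρ i j * x j := by
        funext ρ
        simp [dotProduct, Matrix.mulVec, Pi.star_apply]
      rw [he2]
      exact continuous_finset_sum _ fun i _ => continuous_const.mul
        (continuous_finset_sum _ fun j _ => (sd_cont_entry i j).mul continuous_const)
    have hs : IsClosed {z : ℂ | 0 ≤ z} := by
      have he3 : {z : ℂ | 0 ≤ z} = Complex.re ⁻¹' Set.Ici 0 ∩ Complex.im ⁻¹' {0} := by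
        ext z
        simp [Complex.le_def, eq_comm]
      rw [he3]
      exact (isClosed_Ici.preimage Complex.continuous_re).inter
        (isClosed_singleton.preimage Complex.continuous_im)
    exact hs.preimage hc
  have h3 : IsClosed {ρ : Matrix (Fin d) (Fin d) ℂ | ρ.trace = 1} := by
    refine isClosed_eq ?_ continuous_const
    show Continuous fun ρ : Matrix (Fin d) (Fin d) ℂ => ∑ i, ρ i i
    exact continuous_finset_sum _ fun i _ => sd_cont_entry i i
  have he : {ρ : Matrix (Fin d) (Fin d) ℂ | IsDensityMatrix ρ}
      = ({ρ : Matrix (Fin d) (Fin d) ℂ | ρ.IsHermitian} ∩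
          {ρ | ∀ x : Fin d → ℂ, 0 ≤ dotProduct (star x) (ρ *ᵥ x)}) ∩ {ρ | ρ.trace = 1} := by
    ext ρ
    constructor
    · intro h
      exact ⟨⟨h.1.1, h.1.dotProduct_mulVec_nonneg⟩, h.2⟩
    · intro h
      exact ⟨Matrix.PosSemidef.of_dotProduct_mulVec_nonneg h.1.1 h.1.2, h.2⟩
  rw [he]
  exact (h1.inter h2).inter h3

lemma sd_conj_entry_gen (V : Matrix (Fin d) (Fin d) ℂ) (f : Fin d → ℂ) (i j : Fin d) :
    (V * Matrix.diagonal f * star V) i j = ∑ k, f k * (V i k * star (V j k)) := by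
  rw [Matrix.star_eq_conjTranspose]
  simp only [Matrix.mul_apply, Matrix.diagonal_apply, Matrix.conjTranspose_apply,
    mul_ite, mul_zero, ite_mul, zero_mul, Finset.sum_ite_eq, Finset.sum_ite_eq',
    Finset.mem_univ, if_true]
  refine Finset.sum_congr rfl fun k _ => ?_
  ring

lemma sd_entry_abs_le {ρ : Matrix (Fin d) (Fin d) ℂ} (hρ : IsDensityMatrix ρ) (i j : Fin d) :
    ‖ρ i j‖ ≤ 1 := by
  have hH := hρ.1.1
  set V : Matrix (Fin d) (Fin d) ℂ := (hH.eigenvectorUnitary : Matrix (Fin d) (Fin d) ℂ) with hV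
  have hV1 : star V * V = 1 := (sd_upair _).1
  have hV2 : V * star V = 1 := (sd_upair _).2
  set p : Fin d → ℝ := hH.eigenvalues with hp
  have hp0 := (sd_density_eigen hρ).1
  have hps := (sd_density_eigen hρ).2
  have habsV : ∀ (k l : Fin d), ‖V k l‖ ≤ 1 := by
    intro k l
    have hsum := sd_unit_row_sums V hV2 k
    have hle : Complex.normSq (V k l) ≤ 1 := by
      rw [← hsum]
      exact Finset.single_le_sum (fun m _ => Complex.normSq_nonneg _) (Finset.mem_univ l)
    rw [Complex.norm_def]
    exact Real.sqrt_le_one.mpr hle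
  have hentry : ρ i j = ∑ k, (p k : ℂ) * (V i k * star (V j k)) := by
    conv_lhs => rw [sd_spectral hH]
    exact sd_conj_entry_gen V _ i j
  rw [hentry]
  calc ‖∑ k, (p k : ℂ) * (V i k * star (V j k))‖
      ≤ ∑ k, ‖(p k : ℂ) * (V i k * star (V j k))‖ := norm_sum_le _ _
    _ ≤ ∑ k, p k := by
        refine Finset.sum_le_sum fun k _ => ?_
        rw [norm_mul, norm_mul, Complex.norm_real, Real.norm_eq_abs, abs_of_nonneg (hp0 k)]
        have hstar : ‖star (V j k)‖ = ‖V j k‖ := by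
          rw [Complex.star_def, Complex.norm_conj]
        have h1 : ‖V i k‖ * ‖star (V j k)‖ ≤ 1 := by
          rw [hstar]
          exact mul_le_one₀ (habsV i k) (norm_nonneg _) (habsV j k)
        calc p k * (‖V i k‖ * ‖star (V j k)‖) ≤ p k * 1 :=
              mul_le_mul_of_nonneg_left h1 (hp0 k)
          _ = p k := mul_one _
    _ = 1 := hps

lemma sd_density_compact : IsCompact {ρ : Matrix (Fin d) (Fin d) ℂ | IsDensityMatrix ρ} := by
  have hpi : IsCompact ((Set.univ.pi fun _ : Fin d => Set.univ.pi fun _ : Fin d =>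
      Metric.closedBall (0 : ℂ) 1) : Set (Matrix (Fin d) (Fin d) ℂ)) :=
    isCompact_univ_pi fun _ => isCompact_univ_pi fun _ => isCompact_closedBall _ _
  refine hpi.of_isClosed_subset sd_density_closed ?_
  intro ρ hρ
  intro i _ j _
  show dist (ρ i j) 0 ≤ 1
  rw [Complex.dist_eq, sub_zero]
  exact sd_entry_abs_le hρ i j

lemma sd_psd_smul {ρ : Matrix (Fin d) (Fin d) ℂ} (h : ρ.PosSemidef) {a : ℝ} (ha : 0 ≤ a) :
    ((a : ℂ) • ρ).PosSemidef := by
  refine Matrix.PosSemidef.of_dotProduct_mulVec_nonneg ?_ ?_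
  · have he : ρᴴ = ρ := h.1
    show ((a : ℂ) • ρ)ᴴ = (a : ℂ) • ρ
    rw [Matrix.conjTranspose_smul, he]
    congr 1
    simp [Complex.star_def, Complex.conj_ofReal]
  · intro x
    rw [Matrix.smul_mulVec, dotProduct_smul, smul_eq_mul]
    have h0 : (0 : ℂ) ≤ (a : ℂ) := by
      rw [Complex.le_def]
      simp [ha]
    exact mul_nonneg h0 (h.dotProduct_mulVec_nonneg x)

lemma sd_diag_entry_nonneg {ρ : Matrix (Fin d) (Fin d) ℂ} (h : ρ.PosSemidef) (j : Fin d) :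
    0 ≤ ρ j j := by
  have h2 := h.dotProduct_mulVec_nonneg (Pi.single j 1)
  have he : dotProduct (star (Pi.single j 1)) (ρ *ᵥ Pi.single j 1) = ρ j j := by
    rw [Matrix.mulVec_single]
    simp [dotProduct, Pi.single_apply, ite_mul, zero_mul, Finset.sum_ite_eq, apply_ite]
  rwa [he] at h2

lemma sd_density_combo {ρ₁ ρ₂ : Matrix (Fin d) (Fin d) ℂ} (h₁ : IsDensityMatrix ρ₁)
    (h₂ : IsDensityMatrix ρ₂) {a b : ℝ} (ha : 0 ≤ a) (hb : 0 ≤ b) (hab : a + b = 1) :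
    IsDensityMatrix ((a : ℂ) • ρ₁ + (b : ℂ) • ρ₂) := by
  constructor
  · exact (sd_psd_smul h₁.1 ha).add (sd_psd_smul h₂.1 hb)
  · rw [Matrix.trace_add, Matrix.trace_smul, Matrix.trace_smul, h₁.2, h₂.2]
    rw [smul_eq_mul, smul_eq_mul, mul_one, mul_one]
    exact_mod_cast congrArg (fun x : ℝ => (x : ℂ)) hab

lemma sd_entropy_concave {ρ₁ ρ₂ : Matrix (Fin d) (Fin d) ℂ} (h₁ : IsDensityMatrix ρ₁)
    (h₂ : IsDensityMatrix ρ₂) {a b : ℝ} (ha : 0 < a) (hb : 0 < b) (hab : a + b = 1) :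
    a * vnEntropy ρ₁ + b * vnEntropy ρ₂ ≤ vnEntropy ((a : ℂ) • ρ₁ + (b : ℂ) • ρ₂) := by
  set σ := (a : ℂ) • ρ₁ + (b : ℂ) • ρ₂ with hσdef
  have hσ : IsDensityMatrix σ := sd_density_combo h₁ h₂ ha.le hb.le hab
  have hH := hσ.1.1
  set W : Matrix (Fin d) (Fin d) ℂ := (hH.eigenvectorUnitary : Matrix (Fin d) (Fin d) ℂ) with hW
  have hW1 : star W * W = 1 := (sd_upair _).1
  have hW2 : W * star W = 1 := (sd_upair _).2
  set lam : Fin d → ℝ := hH.eigenvalues with hlam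
  have hl0 := (sd_density_eigen hσ).1
  have hls := (sd_density_eigen hσ).2
  have hdiag : star W * σ * W = Matrix.diagonal (fun i => (lam i : ℂ)) :=
    by have := hH.conjStarAlgAut_star_eigenvectorUnitary; rw [Unitary.conjStarAlgAut_star_apply] at this; exact this
  have hsplit : star W * σ * W
      = (a : ℂ) • (star W * ρ₁ * W) + (b : ℂ) • (star W * ρ₂ * W) := by
    rw [hσdef]
    rw [Matrix.mul_add, Matrix.add_mul, Matrix.mul_smul, Matrix.smul_mul,
      Matrix.mul_smul, Matrix.smul_mul]
  have hpsd : ∀ ρ : Matrix (Fin d) (Fin d) ℂ, ρ.PosSemidef → (star W * ρ * W).PosSemidef := by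
    intro ρ hρ
    have := hρ.conjTranspose_mul_mul_same W
    rwa [← Matrix.star_eq_conjTranspose] at this
  have hker : ∀ (ρ : Matrix (Fin d) (Fin d) ℂ), ρ.PosSemidef →
      ∀ j, lam j = 0 → (star W * ρ₁ * W) j j = 0 ∧ (star W * ρ₂ * W) j j = 0 := by
    intro _ _ j hj
    have hjj : (star W * σ * W) j j = 0 := by
      rw [hdiag, Matrix.diagonal_apply_eq, hj]
      simp
    have hsum : (a : ℂ) * (star W * ρ₁ * W) j j + (b : ℂ) * (star W * ρ₂ * W) j j = 0 := by
      have := congrArg (fun M => M j j) hsplit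
      simp only [Matrix.add_apply, Matrix.smul_apply, smul_eq_mul] at this
      rw [← this, hjj]
    have hz1 := sd_diag_entry_nonneg (hpsd ρ₁ h₁.1) j
    have hz2 := sd_diag_entry_nonneg (hpsd ρ₂ h₂.1) j
    rw [Complex.le_def] at hz1 hz2
    have hre : a * ((star W * ρ₁ * W) j j).re + b * ((star W * ρ₂ * W) j j).re = 0 := by
      have := congrArg Complex.re hsum
      simpa [Complex.add_re, Complex.mul_re, ← hz1.2, ← hz2.2] using this
    have hx0 : 0 ≤ ((star W * ρ₁ * W) j j).re := by simpa using hz1.1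
    have hy0 : 0 ≤ ((star W * ρ₂ * W) j j).re := by simpa using hz2.1
    have hre1 : ((star W * ρ₁ * W) j j).re = 0 := by
      nlinarith [mul_nonneg ha.le hx0, mul_nonneg hb.le hy0, mul_le_mul_of_nonneg_left hx0 ha.le,
        mul_le_mul_of_nonneg_left hy0 hb.le]
    have hre2 : ((star W * ρ₂ * W) j j).re = 0 := by
      nlinarith [mul_nonneg ha.le hx0, mul_nonneg hb.le hy0]
    constructor
    · apply Complex.ext
      · simpa using hre1
      · simpa using hz1.2.symm
    · apply Complex.ext
      · simpa using hre2
      · simpa using hz2.2.symm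
  have hk1 := sd_klein_density ρ₁ W lam h₁ hW1 hW2 hl0 hls.le
    (fun j hj => ((hker ρ₁ h₁.1 j hj).1))
  have hk2 := sd_klein_density ρ₂ W lam h₂ hW1 hW2 hl0 hls.le
    (fun j hj => ((hker ρ₂ h₂.1 j hj).2))
  have hcomb : ∑ j, lam j * Real.log (lam j)
      = a * (∑ j, ((star W * ρ₁ * W) j j).re * Real.log (lam j))
        + b * (∑ j, ((star W * ρ₂ * W) j j).re * Real.log (lam j)) := by
    rw [Finset.mul_sum, Finset.mul_sum, ← Finset.sum_add_distrib]
    refine Finset.sum_congr rfl fun j _ => ?_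
    have hjj : (lam j : ℂ) = (a : ℂ) * (star W * ρ₁ * W) j j + (b : ℂ) * (star W * ρ₂ * W) j j := by
      have := congrArg (fun M => M j j) hsplit
      simp only [Matrix.add_apply, Matrix.smul_apply, smul_eq_mul] at this
      rw [← this, hdiag, Matrix.diagonal_apply_eq]
    have hjr := congrArg Complex.re hjj
    simp only [Complex.ofReal_re, Complex.add_re, Complex.mul_re, Complex.ofReal_im,
      zero_mul, sub_zero] at hjr
    rw [hjr]
    ring
  have hfin : -vnEntropy σ ≤ a * (-vnEntropy ρ₁) + b * (-vnEntropy ρ₂) := by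
    rw [sd_vnEntropy_eq hH, neg_neg]
    calc ∑ j, lam j * Real.log (lam j)
        = a * (∑ j, ((star W * ρ₁ * W) j j).re * Real.log (lam j))
          + b * (∑ j, ((star W * ρ₂ * W) j j).re * Real.log (lam j)) := hcomb
      _ ≤ a * (-vnEntropy ρ₁) + b * (-vnEntropy ρ₂) := by
          have t1 := mul_le_mul_of_nonneg_left hk1 ha.le
          have t2 := mul_le_mul_of_nonneg_left hk2 hb.le
          linarith
  linarith

end topologylayer


section Klayer
variable {d c : ℕ}

lemma sd_K_convex (H : Matrix (Fin d) (Fin d) ℂ) (Q : Fin c → Matrix (Fin d) (Fin d) ℂ)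
    (T : ℝ) (hT : 0 < T) :
    Convex ℝ {P : (Fin c → ℝ) × ℝ | ∃ ρ, IsDensityMatrix ρ ∧
      (∀ i, ((Q i * ρ).trace).re = P.1 i) ∧ ((H * ρ).trace).re - T * vnEntropy ρ ≤ P.2} := by
  rintro P₁ ⟨ρ₁, hρ₁, ht₁, hE₁⟩ P₂ ⟨ρ₂, hρ₂, ht₂, hE₂⟩ a b ha hb hab
  rcases eq_or_lt_of_le ha with rfl | ha'
  · have hb1 : b = 1 := by linarith
    have he : (0 : ℝ) • P₁ + b • P₂ = P₂ := by rw [hb1, zero_smul, one_smul, zero_add]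
    rw [he]
    exact ⟨ρ₂, hρ₂, ht₂, hE₂⟩
  rcases eq_or_lt_of_le hb with rfl | hb'
  · have ha1 : a = 1 := by linarith
    have he : a • P₁ + (0 : ℝ) • P₂ = P₁ := by rw [ha1, zero_smul, one_smul, add_zero]
    rw [he]
    exact ⟨ρ₁, hρ₁, ht₁, hE₁⟩
  set σ := (a : ℂ) • ρ₁ + (b : ℂ) • ρ₂ with hσdef
  have hσ : IsDensityMatrix σ := sd_density_combo hρ₁ hρ₂ ha hb hab
  refine ⟨σ, hσ, ?_, ?_⟩
  · intro i
    have hlin : ((Q i * σ).trace) = (a : ℂ) * (Q i * ρ₁).trace + (b : ℂ) * (Q i * ρ₂).trace := by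
      rw [hσdef, Matrix.mul_add, Matrix.mul_smul, Matrix.mul_smul, Matrix.trace_add,
        Matrix.trace_smul, Matrix.trace_smul]
      simp [smul_eq_mul]
    have hre : ((Q i * σ).trace).re = a * ((Q i * ρ₁).trace).re + b * ((Q i * ρ₂).trace).re := by
      rw [hlin]
      simp [Complex.add_re, Complex.mul_re]
    rw [hre, ht₁ i, ht₂ i]
    rfl
  · have hlin : ((H * σ).trace).re = a * ((H * ρ₁).trace).re + b * ((H * ρ₂).trace).re := by
      rw [hσdef, Matrix.mul_add, Matrix.mul_smul, Matrix.mul_smul, Matrix.trace_add,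
        Matrix.trace_smul, Matrix.trace_smul]
      simp [Complex.add_re, Complex.mul_re, smul_eq_mul]
    have hent := sd_entropy_concave hρ₁ hρ₂ ha' hb' hab
    have h2 : (a • P₁ + b • P₂).2 = a * P₁.2 + b * P₂.2 := rfl
    rw [h2]
    have hTent : T * (a * vnEntropy ρ₁ + b * vnEntropy ρ₂) ≤ T * vnEntropy σ :=
      mul_le_mul_of_nonneg_left hent hT.le
    have hmul1 := mul_le_mul_of_nonneg_left hE₁ ha
    have hmul2 := mul_le_mul_of_nonneg_left hE₂ hb
    rw [hlin]
    nlinarith [hTent, hmul1, hmul2]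

lemma sd_K_closed (hd : 0 < d) (H : Matrix (Fin d) (Fin d) ℂ)
    (Q : Fin c → Matrix (Fin d) (Fin d) ℂ) (T : ℝ) (hT : 0 < T) :
    IsClosed {P : (Fin c → ℝ) × ℝ | ∃ ρ, IsDensityMatrix ρ ∧
      (∀ i, ((Q i * ρ).trace).re = P.1 i) ∧ ((H * ρ).trace).re - T * vnEntropy ρ ≤ P.2} := by
  haveI : FirstCountableTopology (Matrix (Fin d) (Fin d) ℂ) :=
    inferInstanceAs (FirstCountableTopology (Fin d → Fin d → ℂ))
  refine IsSeqClosed.isClosed ?_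
  intro Pn P hmem hlim
  choose ρn hρd htn hEn using hmem
  obtain ⟨σ, hσ, φ, hφ, hconv⟩ := sd_density_compact.tendsto_subseq (x := ρn) fun n => hρd n
  have hσd : IsDensityMatrix σ := hσ
  have hlimφ : Filter.Tendsto (fun n => Pn (φ n)) Filter.atTop (nhds P) :=
    hlim.comp hφ.tendsto_atTop
  have hco : ∀ i, ((Q i * σ).trace).re = P.1 i := by
    intro i
    have h1 : Filter.Tendsto (fun n => ((Q i * ρn (φ n)).trace).re) Filter.atTop
        (nhds (((Q i * σ).trace).re)) :=
      ((sd_cont_trace_mul (Q i)).tendsto σ).comp hconv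
    have h2 : Filter.Tendsto (fun n => ((Q i * ρn (φ n)).trace).re) Filter.atTop
        (nhds (P.1 i)) := by
      have h3 : Filter.Tendsto (fun n => (Pn (φ n)).1 i) Filter.atTop (nhds (P.1 i)) :=
        (((continuous_apply i).comp continuous_fst).tendsto P).comp hlimφ
      have h4 : (fun n => ((Q i * ρn (φ n)).trace).re) = fun n => (Pn (φ n)).1 i := by
        funext n
        exact htn (φ n) i
      rw [h4]
      exact h3
    exact tendsto_nhds_unique h1 h2
  refine ⟨σ, hσd, hco, ?_⟩
  refine le_of_forall_pos_le_add ?_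
  intro η hη
  have hHσ := hσd.1.1
  set V : Matrix (Fin d) (Fin d) ℂ := (hHσ.eigenvectorUnitary : Matrix (Fin d) (Fin d) ℂ) with hV
  have hV1 : star V * V = 1 := (sd_upair _).1
  have hV2 : V * star V = 1 := (sd_upair _).2
  set p : Fin d → ℝ := hHσ.eigenvalues with hp
  have hp0 := (sd_density_eigen hσd).1
  have hps := (sd_density_eigen hσd).2
  have hdiag : star V * σ * V = Matrix.diagonal (fun i => (p i : ℂ)) :=
    by have := hHσ.conjStarAlgAut_star_eigenvectorUnitary; rw [Unitary.conjStarAlgAut_star_apply] at this; exact this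
  set F : ℝ → ℝ := fun δ => -∑ j, p j * Real.log ((1 - δ) * p j + δ / d) with hF
  have hterm : ∀ j : Fin d, Filter.Tendsto (fun δ : ℝ => p j * Real.log ((1 - δ) * p j + δ / d))
      (nhds 0) (nhds (p j * Real.log (p j))) := by
    intro j
    by_cases hpj : p j = 0
    · simp only [hpj, zero_mul]
      exact tendsto_const_nhds
    · have hpj' : 0 < p j := lt_of_le_of_ne (hp0 j) (Ne.symm hpj)
      have haff : Filter.Tendsto (fun δ : ℝ => (1 - δ) * p j + δ / d) (nhds 0) (nhds (p j)) := by
        have hco2 : Continuous fun δ : ℝ => (1 - δ) * p j + δ / d :=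
          ((continuous_const.sub continuous_id).mul continuous_const).add
            (continuous_id.div_const _)
        have := hco2.tendsto 0
        simpa using this
      have hlog := (Real.continuousAt_log hpj'.ne').tendsto.comp haff
      exact tendsto_const_nhds.mul hlog
  have hFc : Filter.Tendsto F (nhds 0) (nhds (vnEntropy σ)) := by
    rw [sd_vnEntropy_eq hHσ]
    exact (tendsto_finset_sum _ fun j _ => hterm j).neg
  have hηT : 0 < η / T := div_pos hη hT
  have hev := Metric.tendsto_nhds.mp hFc (η / T) hηT
  obtain ⟨ε, hε, hball⟩ := Metric.eventually_nhds_iff.mp hev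
  set δ : ℝ := min (ε / 2) 2⁻¹ with hδdef
  have hδ0 : 0 < δ := lt_min (by linarith) (by norm_num)
  have hδ1 : δ < 1 := lt_of_le_of_lt (min_le_right _ _) (by norm_num)
  have hδε : dist δ 0 < ε := by
    rw [Real.dist_eq, sub_zero, abs_of_pos hδ0]
    exact lt_of_le_of_lt (min_le_left _ _) (by linarith)
  have hFδ : F δ ≤ vnEntropy σ + η / T := by
    have := hball hδε
    rw [Real.dist_eq] at this
    have := (abs_lt.mp this).2
    linarith
  set g : Fin d → ℝ := fun j => (1 - δ) * p j + δ / d with hg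
  have hgpos : ∀ j, 0 < g j := by
    intro j
    have h1 : 0 ≤ (1 - δ) * p j := mul_nonneg (by linarith) (hp0 j)
    have h2 : 0 < δ / d := div_pos hδ0 (by exact_mod_cast hd)
    rw [hg]
    dsimp only
    linarith
  have hgsum : ∑ j, g j = 1 := by
    rw [hg]
    dsimp only
    rw [Finset.sum_add_distrib, ← Finset.mul_sum, hps, Finset.sum_const, Finset.card_univ,
      Fintype.card_fin, nsmul_eq_mul]
    have hd' : (d : ℝ) ≠ 0 := by
      simp only [ne_eq, Nat.cast_eq_zero]
      omega
    field_simp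
    ring
  have hklein : ∀ ρ : Matrix (Fin d) (Fin d) ℂ, IsDensityMatrix ρ →
      ((H * ρ).trace).re + T * (∑ j, ((star V * ρ * V) j j).re * Real.log (g j))
        ≤ ((H * ρ).trace).re - T * vnEntropy ρ := by
    intro ρ hρ
    have hkl := sd_klein_density ρ V g hρ hV1 hV2 (fun j => (hgpos j).le) hgsum.le
      (fun j hj => absurd hj (hgpos j).ne')
    have := mul_le_mul_of_nonneg_left hkl hT.le
    linarith
  set G : Matrix (Fin d) (Fin d) ℂ → ℝ := fun ρ =>
    ((H * ρ).trace).re + T * (∑ j, ((star V * ρ * V) j j).re * Real.log (g j)) with hG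
  have hGc : Continuous G := by
    refine (sd_cont_trace_mul H).add (continuous_const.mul ?_)
    exact continuous_finset_sum _ fun j _ =>
      (Complex.continuous_re.comp (sd_cont_conj_entry (star V) V j)).mul continuous_const
  have hchain : ∀ n, G (ρn (φ n)) ≤ (Pn (φ n)).2 := fun n =>
    le_trans (hklein _ (hρd _)) (hEn (φ n))
  have hGlim : Filter.Tendsto (fun n => G (ρn (φ n))) Filter.atTop (nhds (G σ)) :=
    (hGc.tendsto σ).comp hconv
  have hP2 : Filter.Tendsto (fun n => (Pn (φ n)).2) Filter.atTop (nhds P.2) :=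
    (continuous_snd.tendsto P).comp hlimφ
  have hle : G σ ≤ P.2 := le_of_tendsto_of_tendsto' hGlim hP2 hchain
  have hGσ : G σ = ((H * σ).trace).re - T * F δ := by
    rw [hG, hF]
    dsimp only
    have he : ∑ j, ((star V * σ * V) j j).re * Real.log ((1 - δ) * p j + δ / d)
        = ∑ j, p j * Real.log ((1 - δ) * p j + δ / d) := by
      refine Finset.sum_congr rfl fun j _ => ?_
      rw [hdiag, Matrix.diagonal_apply_eq]
      simp
    rw [he]
    ring
  clear_value G g F δ V p
  have hSF : vnEntropy σ ≥ F δ - η / T := by linarith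
  have hfinal : ((H * σ).trace).re - T * vnEntropy σ ≤ G σ + η := by
    rw [hGσ]
    have h1 : T * vnEntropy σ ≥ T * (F δ - η / T) := mul_le_mul_of_nonneg_left hSF hT.le
    have h2 : T * (F δ - η / T) = T * F δ - η := by
      have h3 : T * (η / T) = η := by field_simp
      rw [mul_sub, h3]
    linarith
  linarith

end Klayer



section mainhelpers
variable {d : ℕ}

lemma sd_trace_real {B ρ : Matrix (Fin d) (Fin d) ℂ} (hB : B.IsHermitian) (hρ : ρ.IsHermitian) :
    (B * ρ).trace = (((B * ρ).trace).re : ℂ) := by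
  have hBB : Bᴴ = B := hB
  have hρρ : ρᴴ = ρ := hρ
  have h1 : star ((B * ρ).trace) = (B * ρ).trace := by
    rw [← Matrix.trace_conjTranspose, Matrix.conjTranspose_mul, hBB, hρρ, Matrix.trace_mul_comm]
  have h2 : (starRingEnd ℂ) ((B * ρ).trace) = (B * ρ).trace := h1
  exact (Complex.conj_eq_iff_re.mp h2).symm

lemma sd_muDotQ_hermitian {c : ℕ} (Q : Fin c → Matrix (Fin d) (Fin d) ℂ)
    (hQ : ∀ i, (Q i).IsHermitian) (μ : Fin c → ℝ) : (muDotQ Q μ).IsHermitian := by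
  show (muDotQ Q μ)ᴴ = muDotQ Q μ
  rw [muDotQ, Matrix.conjTranspose_sum]
  refine Finset.sum_congr rfl fun i _ => ?_
  rw [Matrix.conjTranspose_smul]
  have hQi : (Q i)ᴴ = Q i := hQ i
  rw [hQi]
  congr 1
  simp [Complex.star_def, Complex.conj_ofReal]

lemma sd_trace_split {c : ℕ} (H : Matrix (Fin d) (Fin d) ℂ)
    (Q : Fin c → Matrix (Fin d) (Fin d) ℂ) (μ : Fin c → ℝ) (ρ : Matrix (Fin d) (Fin d) ℂ) :
    (((H - muDotQ Q μ) * ρ).trace).re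
      = ((H * ρ).trace).re - ∑ i, μ i * ((Q i * ρ).trace).re := by
  have h1 : (muDotQ Q μ * ρ).trace = ∑ i, (μ i : ℂ) * (Q i * ρ).trace := by
    rw [muDotQ, Matrix.sum_mul, Matrix.trace_sum]
    refine Finset.sum_congr rfl fun i _ => ?_
    rw [Matrix.smul_mul, Matrix.trace_smul, smul_eq_mul]
  have h2 : ((H - muDotQ Q μ) * ρ).trace = (H * ρ).trace - ∑ i, (μ i : ℂ) * (Q i * ρ).trace := by
    rw [Matrix.sub_mul, Matrix.trace_sub, h1]
  rw [h2, Complex.sub_re, Complex.re_sum]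
  congr 1
  refine Finset.sum_congr rfl fun i _ => ?_
  simp [Complex.mul_re]

end mainhelpers

/-- For every `T > 0` and feasible `q`,
`F_T(Q,q) = sup_{μ ∈ ℝ^c} (μ·q − T ln Z_T(μ))`. -/
theorem stmt_1 (d c : ℕ) (hd : 1 ≤ d)
    (H : Matrix (Fin d) (Fin d) ℂ) (hH : H.IsHermitian)
    (Q : Fin c → Matrix (Fin d) (Fin d) ℂ) (hQ : ∀ i, (Q i).IsHermitian)
    (q : Fin c → ℝ) (T : ℝ) (hT : 0 < T)
    (hfeas : ∃ ρ : Matrix (Fin d) (Fin d) ℂ, IsDensityMatrix ρ ∧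
      ∀ i, Matrix.trace (Q i * ρ) = (q i : ℂ)) :
    sInf {x : ℝ | ∃ ρ : Matrix (Fin d) (Fin d) ℂ, IsDensityMatrix ρ ∧
        (∀ i, Matrix.trace (Q i * ρ) = (q i : ℂ)) ∧
        x = (Matrix.trace (H * ρ)).re - T * vnEntropy ρ}
      = ⨆ μ : Fin c → ℝ, (∑ i, μ i * q i - T * Real.log (partitionZ H Q T μ)) := by
  classical
  have hd0 : 0 < d := hd
  obtain ⟨ρ₀, hρ₀, hq₀⟩ := hfeas
  set S : Set ℝ := {x : ℝ | ∃ ρ : Matrix (Fin d) (Fin d) ℂ, IsDensityMatrix ρ ∧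
      (∀ i, Matrix.trace (Q i * ρ) = (q i : ℂ)) ∧
      x = (Matrix.trace (H * ρ)).re - T * vnEntropy ρ} with hS
  have hAH : ∀ μ : Fin c → ℝ, (H - muDotQ Q μ).IsHermitian :=
    fun μ => hH.sub (sd_muDotQ_hermitian Q hQ μ)
  have hZeq : ∀ μ : Fin c → ℝ, partitionZ H Q T μ
      = (NormedSpace.exp ((-(T⁻¹) : ℂ) • (H - muDotQ Q μ))).trace.re := fun μ => rfl
  set Dfun : (Fin c → ℝ) → ℝ :=
    fun μ => ∑ i, μ i * q i - T * Real.log (partitionZ H Q T μ) with hDfun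
  have weak : ∀ μ : Fin c → ℝ, ∀ x ∈ S, Dfun μ ≤ x := by
    intro μ x hx
    obtain ⟨ρ, hρ, htr, hxe⟩ := hx
    have hg := sd_gibbs_ineq (hAH μ) hT hd0 hρ
    rw [← hZeq μ] at hg
    have hsplit := sd_trace_split H Q μ ρ
    have hqre : ∀ i, ((Q i * ρ).trace).re = q i := fun i => by rw [htr i]; simp
    have hsum : ∑ i, μ i * ((Q i * ρ).trace).re = ∑ i, μ i * q i :=
      Finset.sum_congr rfl fun i _ => by rw [hqre i]
    rw [hsplit, hsum] at hg
    rw [hxe, hDfun]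
    dsimp only
    linarith
  have hx₀ : ((H * ρ₀).trace).re - T * vnEntropy ρ₀ ∈ S := ⟨ρ₀, hρ₀, hq₀, rfl⟩
  have hSne : S.Nonempty := ⟨_, hx₀⟩
  have hbdd : BddBelow S := ⟨Dfun 0, fun x hx => weak 0 x hx⟩
  have hDbdd : BddAbove (Set.range Dfun) := by
    refine ⟨((H * ρ₀).trace).re - T * vnEntropy ρ₀, ?_⟩
    rintro y ⟨μ, rfl⟩
    exact weak μ _ hx₀
  have hle1 : (⨆ μ, Dfun μ) ≤ sInf S := ciSup_le fun μ => le_csInf hSne fun x hx => weak μ x hx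
  have hle2 : sInf S ≤ ⨆ μ, Dfun μ := by
    refine le_of_forall_pos_le_add ?_
    intro ε hε
    set K : Set ((Fin c → ℝ) × ℝ) := {P : (Fin c → ℝ) × ℝ | ∃ ρ, IsDensityMatrix ρ ∧
      (∀ i, ((Q i * ρ).trace).re = P.1 i) ∧ ((H * ρ).trace).re - T * vnEntropy ρ ≤ P.2} with hK
    have hKcl : IsClosed K := sd_K_closed hd0 H Q T hT
    have hKcv : Convex ℝ K := sd_K_convex H Q T hT
    have hnotin : ((q, sInf S - ε) : (Fin c → ℝ) × ℝ) ∉ K := by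
      rintro ⟨ρ, hρ, htr, hE⟩
      have htr' : ∀ i, (Q i * ρ).trace = (q i : ℂ) := by
        intro i
        rw [sd_trace_real (hQ i) hρ.1.1, htr i]
      have hmem : ((H * ρ).trace).re - T * vnEntropy ρ ∈ S := ⟨ρ, hρ, htr', rfl⟩
      have h1 := csInf_le hbdd hmem
      simp only at hE
      linarith
    obtain ⟨f, u, hfu, hfK⟩ := geometric_hahn_banach_point_closed hKcv hKcl hnotin
    set lam : ℝ := f ((0 : Fin c → ℝ), (1 : ℝ)) with hlam
    set w : Fin c → ℝ := fun i => f ((Pi.single i 1 : Fin c → ℝ), (0 : ℝ)) with hw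
    have hfdec : ∀ (v : Fin c → ℝ) (y : ℝ), f (v, y) = (∑ i, v i * w i) + y * lam := by
      intro v y
      have hsplit : ((v, y) : (Fin c → ℝ) × ℝ)
          = (∑ i, v i • ((Pi.single i 1 : Fin c → ℝ), (0 : ℝ)))
            + y • (((0 : Fin c → ℝ), (1 : ℝ))) := by
        have hfst : (∑ i, v i • ((Pi.single i 1 : Fin c → ℝ), (0 : ℝ))).1 = v := by
          rw [Prod.fst_sum]
          have he : ∀ i : Fin c, (v i • ((Pi.single i 1 : Fin c → ℝ), (0 : ℝ))).1
              = Pi.single i (v i) := by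
            intro i
            show v i • (Pi.single i 1 : Fin c → ℝ) = Pi.single i (v i)
            rw [← Pi.single_smul, smul_eq_mul, mul_one]
          rw [Finset.sum_congr rfl fun i _ => he i]
          exact Finset.univ_sum_single v
        have hsnd : (∑ i, v i • ((Pi.single i 1 : Fin c → ℝ), (0 : ℝ))).2 = 0 := by
          rw [Prod.snd_sum]
          simp
        apply Prod.ext
        · rw [Prod.fst_add, hfst]
          show v = v + y • (0 : Fin c → ℝ)
          simp
        · rw [Prod.snd_add, hsnd]
          show y = 0 + y • (1 : ℝ)
          simp
      rw [hsplit, map_add, map_sum, _root_.map_smul]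
      have he2 : ∀ i : Fin c, f (v i • ((Pi.single i 1 : Fin c → ℝ), (0 : ℝ))) = v i * w i := by
        intro i
        rw [_root_.map_smul, smul_eq_mul, hw]
      rw [Finset.sum_congr rfl fun i _ => he2 i]
      rw [smul_eq_mul, hlam]
    have hmemK : ∀ ρ : Matrix (Fin d) (Fin d) ℂ, IsDensityMatrix ρ →
        (((fun i => ((Q i * ρ).trace).re), ((H * ρ).trace).re - T * vnEntropy ρ) :
          (Fin c → ℝ) × ℝ) ∈ K := fun ρ h => ⟨ρ, h, fun i => rfl, le_refl _⟩
    have hq₀re : (fun i => ((Q i * ρ₀).trace).re) = q := by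
      funext i
      rw [hq₀ i]
      simp
    have hfx : f ((q, sInf S - ε) : (Fin c → ℝ) × ℝ) = (∑ i, q i * w i) + (sInf S - ε) * lam :=
      hfdec q (sInf S - ε)
    have h₀K := hfK _ (hmemK ρ₀ hρ₀)
    rw [hq₀re, hfdec q _] at h₀K
    rw [hfx] at hfu
    have hE₀ : sInf S ≤ ((H * ρ₀).trace).re - T * vnEntropy ρ₀ := csInf_le hbdd hx₀
    have hlampos : 0 < lam := by nlinarith
    set ν : Fin c → ℝ := fun i => -(w i) / lam with hν
    have hw' : ∀ i, w i = -ν i * lam := by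
      intro i
      rw [hν]
      field_simp
    obtain ⟨τ, hτ, hτval⟩ := sd_thermal_exists (hAH ν) hT hd0
    have hτK := hfK _ (hmemK τ hτ)
    rw [hfdec _ _] at hτK
    set tv : Fin c → ℝ := fun i => ((Q i * τ).trace).re with htv
    have hval : (((H - muDotQ Q ν) * τ).trace).re - T * vnEntropy τ
        = -(T * Real.log (partitionZ H Q T ν)) := by
      rw [hτval, hZeq ν]
    have hval2 : ((H * τ).trace).re - T * vnEntropy τ - ∑ i, ν i * tv i
        = -(T * Real.log (partitionZ H Q T ν)) := by
      rw [← hval, sd_trace_split H Q ν τ]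
      ring
    -- rewrite both sides with w = -ν * lam and compare
    have e1 : ∑ i, q i * w i = (∑ i, q i * (-ν i)) * lam := by
      rw [Finset.sum_mul]
      exact Finset.sum_congr rfl fun i _ => by rw [hw' i]; ring
    have e2 : ∑ i, tv i * w i = (∑ i, tv i * (-ν i)) * lam := by
      rw [Finset.sum_mul]
      exact Finset.sum_congr rfl fun i _ => by rw [hw' i]; ring
    have hineq : (∑ i, q i * (-ν i)) * lam + (sInf S - ε) * lam
        < (∑ i, tv i * (-ν i)) * lam
          + (((H * τ).trace).re - T * vnEntropy τ) * lam := by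
      rw [← e1, ← e2]
      calc ∑ i, q i * w i + (sInf S - ε) * lam < u := hfu
        _ < ∑ i, tv i * w i + (((H * τ).trace).re - T * vnEntropy τ) * lam := hτK
    have hineq2 : (∑ i, q i * (-ν i)) + (sInf S - ε)
        < (∑ i, tv i * (-ν i)) + (((H * τ).trace).re - T * vnEntropy τ) := by
      have := (mul_lt_mul_iff_of_pos_right hlampos).mp (by linarith [hineq] :
        ((∑ i, q i * (-ν i)) + (sInf S - ε)) * lam
          < ((∑ i, tv i * (-ν i)) + (((H * τ).trace).re - T * vnEntropy τ)) * lam)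
      exact this
    have hqν : ∑ i, q i * (-ν i) = -∑ i, ν i * q i := by
      rw [← Finset.sum_neg_distrib]
      exact Finset.sum_congr rfl fun i _ => by ring
    have htν : ∑ i, tv i * (-ν i) = -∑ i, ν i * tv i := by
      rw [← Finset.sum_neg_distrib]
      exact Finset.sum_congr rfl fun i _ => by ring
    have hDν : sInf S - ε < Dfun ν := by
      rw [hDfun]
      dsimp only
      rw [hqν, htν] at hineq2
      linarith
    have hsup := le_ciSup hDbdd ν
    linarith
  exact le_antisymm hle2 hle1
end

section
/- Let f(μ) := μ·q − T ln Z_T(μ) for T > 0 and q ∈ ℝ^c. Then for every i ∈ [c] and every μ ∈ ℝ^c, the partial derivative of f with respect to μ_i exists and equals ∂f/∂μ_i (μ) = q_i − Tr[Q_i ρ_T(μ)]. -/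
open Matrix MeasureTheory
open scoped ComplexOrder

/-! ### Auxiliary lemmas -/

open NormedSpace
open scoped Nat

section AuxNorm
attribute [local instance] Matrix.linftyOpNormedAddCommGroup Matrix.linftyOpNormedRing
  Matrix.linftyOpNormedAlgebra

variable {d : ℕ}

section AuxTopSec

/-- The topology of the local norm, as the instance found first in this section. -/
@[reducible] noncomputable def auxTop : TopologicalSpace (Matrix (Fin d) (Fin d) ℂ) :=
  PseudoMetricSpace.toUniformSpace.toTopologicalSpace

attribute [local instance] auxTop

lemma aux_pow_hasDerivAt (A B : Matrix (Fin d) (Fin d) ℂ) (t : ℝ) (n : ℕ) :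
    HasDerivAt (fun s : ℝ => (A + s • B) ^ n)
      (∑ k ∈ Finset.range n, (A + t • B) ^ k * B * (A + t • B) ^ (n - 1 - k)) t := by
  have hP : HasDerivAt (fun s : ℝ => A + s • B) B t := by
    simpa using ((hasDerivAt_id t).smul_const B).const_add A
  induction n with
  | zero => simpa using hasDerivAt_const t (1 : Matrix (Fin d) (Fin d) ℂ)
  | succ n ih =>
    have h : HasDerivAt ((fun s : ℝ => A + s • B) * fun s => (A + s • B) ^ n) _ t := hP.mul ih
    convert h using 1
    · funext s; rw [pow_succ']; rfl
    rw [Finset.sum_range_succ', Finset.mul_sum, add_comm]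
    congr 1
    · simp
    · apply Finset.sum_congr rfl
      intro k hk
      rw [Finset.mem_range] at hk
      have h2 : n + 1 - 1 - (k + 1) = n - 1 - k := by omega
      rw [h2, pow_succ']; noncomm_ring

variable (d) in
/-- The trace as a continuous linear map. -/
noncomputable def auxTraceCLM : Matrix (Fin d) (Fin d) ℂ →L[ℂ] ℂ :=
  LinearMap.toContinuousLinearMap (Matrix.traceLinearMap (Fin d) ℂ ℂ)

@[simp] lemma auxTraceCLM_apply (M : Matrix (Fin d) (Fin d) ℂ) :
    auxTraceCLM d M = M.trace := rfl

lemma aux_trace_pow_hasDerivAt (A B : Matrix (Fin d) (Fin d) ℂ) (t : ℝ) (n : ℕ) :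
    HasDerivAt (fun s : ℝ => ((A + s • B) ^ n).trace)
      ((n : ℂ) * (B * (A + t • B) ^ (n - 1)).trace) t := by
  have h : HasDerivAt (fun s : ℝ => ((A + s • B) ^ n).trace) _ t :=
    ((auxTraceCLM d).restrictScalars ℝ).hasFDerivAt.comp_hasDerivAt t
    (aux_pow_hasDerivAt A B t n)
  convert h using 1
  simp only [ContinuousLinearMap.coe_restrictScalars', auxTraceCLM_apply, map_sum]
  have key : ∀ k ∈ Finset.range n,
      ((A + t • B) ^ k * B * (A + t • B) ^ (n - 1 - k)).trace
        = (B * (A + t • B) ^ (n - 1)).trace := by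
    intro k hk
    rw [Finset.mem_range] at hk
    rw [Matrix.trace_mul_cycle, ← pow_add]
    have : n - 1 - k + k = n - 1 := by omega
    rw [this, Matrix.trace_mul_comm]
  rw [Finset.sum_congr rfl key, Finset.sum_const, Finset.card_range, nsmul_eq_mul]

end AuxTopSec

/-- Key derivative: `d/dt Tr[exp(A + t B)] = Tr[B exp(A + t B)]`. -/
lemma aux_trace_exp_hasDerivAt [Nonempty (Fin d)] (A B : Matrix (Fin d) (Fin d) ℂ) (t₀ : ℝ) :
    HasDerivAt (fun t : ℝ => (exp (A + t • B)).trace)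
      ((B * exp (A + t₀ • B)).trace) t₀ := by
  set P : ℝ → Matrix (Fin d) (Fin d) ℂ := fun t => A + t • B with hP
  have hsum : ∀ t : ℝ, Summable (fun n : ℕ => (n !⁻¹ : ℂ) • (P t) ^ n) := fun t =>
    expSeries_summable' (𝕂 := ℂ) (P t)
  set g : ℕ → ℝ → ℂ := fun n t => (n !⁻¹ : ℂ) * ((P t) ^ n).trace with hg
  set g' : ℕ → ℝ → ℂ := fun n t => (n !⁻¹ : ℂ) * ((n : ℂ) * (B * (P t) ^ (n - 1)).trace) with hg'
  have hfun : ∀ t : ℝ, (exp (P t)).trace = ∑' n : ℕ, g n t := by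
    intro t
    have h0 : exp (P t) = ∑' n : ℕ, (n !⁻¹ : ℂ) • P t ^ n := by rw [exp_eq_tsum (𝕂 := ℂ)]
    rw [h0, show (∑' n : ℕ, (n !⁻¹ : ℂ) • P t ^ n).trace
        = auxTraceCLM d (∑' n : ℕ, (n !⁻¹ : ℂ) • P t ^ n) from rfl]
    refine ((auxTraceCLM d).map_tsum (hsum t)).trans ?_
    simp [g, Matrix.trace_smul, smul_eq_mul]
  have hderiv : ∀ n (t : ℝ), HasDerivAt (g n) (g' n t) t := fun n t =>
    ((aux_trace_pow_hasDerivAt A B t n).const_mul _)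
  set R : ℝ := |t₀| + 1 with hR
  set r : ℝ := ‖A‖ + R * ‖B‖ with hr
  have hr0 : 0 ≤ r := by positivity
  set C : ℝ := ‖auxTraceCLM d‖ with hC
  have hC0 : 0 ≤ C := norm_nonneg _
  set u : ℕ → ℝ := fun n => C * ‖B‖ * (r ^ (n - 1) / (n - 1)!) with hu_def
  have hu : Summable u := by
    apply Summable.mul_left
    apply (summable_nat_add_iff 1).mp
    simpa using Real.summable_pow_div_factorial r
  have hPnorm : ∀ t : ℝ, t ∈ Metric.ball (0 : ℝ) R → ‖P t‖ ≤ r := by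
    intro t ht
    rw [Metric.mem_ball, dist_zero_right, Real.norm_eq_abs] at ht
    refine (norm_add_le _ _).trans ?_
    rw [hr]
    gcongr
    rw [norm_smul, Real.norm_eq_abs]
    exact mul_le_mul_of_nonneg_right ht.le (norm_nonneg B)
  have hbound : ∀ (n : ℕ) (t : ℝ), t ∈ Metric.ball (0 : ℝ) R → ‖g' n t‖ ≤ u n := by
    intro n t ht
    match n with
    | 0 => simp [g', u, hu_def]; positivity
    | (m+1) =>
      have h1 : ‖g' (m+1) t‖ = ((m !: ℝ))⁻¹ * ‖(B * (P t) ^ m).trace‖ := by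
        simp only [g', norm_mul, norm_inv, Complex.norm_natCast, Nat.add_sub_cancel]
        rw [← mul_assoc, Nat.factorial_succ]
        push_cast
        have hm : ((m : ℝ) + 1) ≠ 0 := by positivity
        have hf : ((m ! : ℝ)) ≠ 0 := by positivity
        field_simp
      have h2 : ‖(B * P t ^ m).trace‖ ≤ C * (‖B‖ * r ^ m) := by
        calc ‖(B * P t ^ m).trace‖ = ‖auxTraceCLM d (B * P t ^ m)‖ := rfl
          _ ≤ C * ‖B * P t ^ m‖ := (auxTraceCLM d).le_opNorm _
          _ ≤ C * (‖B‖ * ‖P t ^ m‖) := by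
              gcongr; exact norm_mul_le _ _
          _ ≤ C * (‖B‖ * r ^ m) := by
              gcongr
              exact (norm_pow_le _ _).trans (pow_le_pow_left₀ (norm_nonneg _) (hPnorm t ht) m)
      rw [h1]
      have hfm : (0:ℝ) < (m ! : ℝ) := by positivity
      calc ((m !: ℝ))⁻¹ * ‖(B * P t ^ m).trace‖ ≤ ((m !: ℝ))⁻¹ * (C * (‖B‖ * r ^ m)) := by
            gcongr
        _ = u (m+1) := by
            simp only [u, Nat.add_sub_cancel]
            field_simp
  have hmem : t₀ ∈ Metric.ball (0 : ℝ) R := by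
    rw [Metric.mem_ball, dist_zero_right, Real.norm_eq_abs, hR]
    linarith
  have h0mem : (0 : ℝ) ∈ Metric.ball (0 : ℝ) R := by
    rw [Metric.mem_ball, dist_self, hR]
    positivity
  have hg0 : Summable (fun n => g n 0) := by
    refine Summable.congr (Summable.map (hsum 0) (auxTraceCLM d) (auxTraceCLM d).continuous) ?_
    intro n
    simp [g, Matrix.trace_smul, smul_eq_mul]
  have hmain := hasDerivAt_tsum_of_isPreconnected hu Metric.isOpen_ball
    (convex_ball (0:ℝ) R).isPreconnected (fun n y _ => hderiv n y) hbound h0mem hg0 hmem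
  have hval : ∑' n, g' n t₀ = (B * exp (P t₀)).trace := by
    have hsum' : Summable fun n => g' n t₀ :=
      Summable.of_norm_bounded hu fun n => hbound n t₀ hmem
    rw [hsum'.tsum_eq_zero_add]
    have hz : g' 0 t₀ = 0 := by simp [g']
    set L2 : Matrix (Fin d) (Fin d) ℂ →L[ℂ] ℂ :=
      (auxTraceCLM d).comp ((ContinuousLinearMap.mul ℂ (Matrix (Fin d) (Fin d) ℂ)) B) with hL2
    have hterm : ∀ n : ℕ, g' (n+1) t₀ = L2 ((n !⁻¹ : ℂ) • P t₀ ^ n) := by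
      intro n
      simp only [g', L2, ContinuousLinearMap.comp_apply, ContinuousLinearMap.mul_apply',
        auxTraceCLM_apply, Matrix.mul_smul, Matrix.trace_smul, smul_eq_mul, Nat.add_sub_cancel,
        Nat.factorial_succ]
      have h1 : ((n : ℂ) + 1) ≠ 0 := Nat.cast_add_one_ne_zero n
      have key : ∀ a b x : ℂ, a ≠ 0 → (a * b)⁻¹ * (a * x) = b⁻¹ * x := by
        intro a b x ha
        rw [mul_inv, mul_comm a⁻¹ b⁻¹, mul_assoc, ← mul_assoc a⁻¹, inv_mul_cancel₀ ha, one_mul]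
      change _ = (B * ((n !⁻¹ : ℂ) • P t₀ ^ n)).trace
      rw [Matrix.mul_smul, Matrix.trace_smul, smul_eq_mul]
      push_cast
      exact key _ _ _ h1
    rw [hz, zero_add, tsum_congr hterm, ← L2.map_tsum (hsum t₀)]
    have h0 : exp (P t₀) = ∑' n : ℕ, (n !⁻¹ : ℂ) • P t₀ ^ n := by rw [exp_eq_tsum (𝕂 := ℂ)]
    rw [← h0]
    simp [L2, ContinuousLinearMap.mul_apply']
    rfl
  rw [hval] at hmain
  refine HasDerivAt.congr_deriv (hmain.congr_of_eventuallyEq ?_) rfl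
  filter_upwards with t
  exact hfun t

/-- Trace of the exponential of a Hermitian matrix by spectral theorem. -/
lemma aux_trace_exp_hermitian {M : Matrix (Fin d) (Fin d) ℂ} (hM : M.IsHermitian) :
    (exp M).trace = ((∑ i, Real.exp (hM.eigenvalues i) : ℝ) : ℂ) := by
  set U : Matrix (Fin d) (Fin d) ℂ := (hM.eigenvectorUnitary : Matrix (Fin d) (Fin d) ℂ) with hU
  have h1 : star U * U = 1 := (Unitary.mem_iff.mp hM.eigenvectorUnitary.2).1
  have h2 : U * star U = 1 := (Unitary.mem_iff.mp hM.eigenvectorUnitary.2).2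
  have hUnit : IsUnit U := ⟨⟨U, star U, by exact h2, by exact h1⟩, rfl⟩
  have hinv : U⁻¹ = star U := Matrix.inv_eq_left_inv h1
  have hconj : exp M
      = U * exp (Matrix.diagonal (RCLike.ofReal ∘ hM.eigenvalues)) * star U := by
    conv_lhs => rw [hM.spectral_theorem, Unitary.conjStarAlgAut_apply]
    rw [← hinv, Matrix.exp_conj U _ hUnit]
  rw [hconj, Matrix.trace_mul_cycle, h1, Matrix.one_mul,
    Matrix.exp_diagonal, Matrix.trace_diagonal]
  push_cast
  refine Finset.sum_congr rfl fun i _ => ?_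
  rw [Pi.coe_exp]
  simp only [Function.comp_apply]
  rw [← Complex.exp_eq_exp_ℂ]
  simp [RCLike.ofReal_alg, Complex.ofReal_exp]

end AuxNorm

section AuxB
variable {d c : ℕ}

lemma aux_muDotQ_update (Q : Fin c → Matrix (Fin d) (Fin d) ℂ) (μ : Fin c → ℝ) (i : Fin c)
    (t : ℝ) :
    muDotQ Q (Function.update μ i t) = muDotQ Q μ + ((t : ℂ) - (μ i : ℂ)) • Q i := by
  unfold muDotQ
  have h1 : ∀ ν : Fin c → ℝ, (∑ k, (ν k : ℂ) • Q k)
      = (ν i : ℂ) • Q i + ∑ k ∈ Finset.univ.erase i, (ν k : ℂ) • Q k := fun ν =>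
    (Finset.add_sum_erase _ _ (Finset.mem_univ i)).symm
  rw [h1, h1 μ, Function.update_self,
    Finset.sum_congr rfl (fun k hk => by
      rw [Function.update_of_ne (Finset.ne_of_mem_erase hk)])]
  module

lemma aux_muDotQ_hermitian (Q : Fin c → Matrix (Fin d) (Fin d) ℂ)
    (hQ : ∀ i, (Q i).IsHermitian) (ν : Fin c → ℝ) : (muDotQ Q ν).IsHermitian := by
  unfold muDotQ Matrix.IsHermitian
  rw [Matrix.conjTranspose_sum]
  refine Finset.sum_congr rfl fun k _ => ?_
  rw [Matrix.conjTranspose_smul, (hQ k).eq, Complex.star_def, Complex.conj_ofReal]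

lemma aux_exponent_hermitian {H : Matrix (Fin d) (Fin d) ℂ} (hH : H.IsHermitian)
    {Q : Fin c → Matrix (Fin d) (Fin d) ℂ} (hQ : ∀ i, (Q i).IsHermitian)
    (T : ℝ) (ν : Fin c → ℝ) :
    ((-(T⁻¹) : ℂ) • (H - muDotQ Q ν)).IsHermitian := by
  have hsub : (H - muDotQ Q ν).IsHermitian := hH.sub (aux_muDotQ_hermitian Q hQ ν)
  unfold Matrix.IsHermitian
  rw [Matrix.conjTranspose_smul, hsub.eq]
  congr 1
  simp [Complex.star_def, ← Complex.ofReal_inv]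

lemma aux_partitionZ_pos (hd : 1 ≤ d) {H : Matrix (Fin d) (Fin d) ℂ} (hH : H.IsHermitian)
    {Q : Fin c → Matrix (Fin d) (Fin d) ℂ} (hQ : ∀ i, (Q i).IsHermitian)
    {T : ℝ} (ν : Fin c → ℝ) : 0 < partitionZ H Q T ν := by
  have : Nonempty (Fin d) := Fin.pos_iff_nonempty.mp hd
  have hherm := aux_exponent_hermitian hH hQ T ν
  unfold partitionZ
  rw [aux_trace_exp_hermitian hherm, Complex.ofReal_re]
  exact Finset.sum_pos (fun j _ => Real.exp_pos _) Finset.univ_nonempty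

end AuxB

/-- the partial derivative of `f(μ) = μ·q − T ln Z_T(μ)` with
respect to `μ_i` exists and equals `q_i − Tr[Q_i ρ_T(μ)]`. -/
theorem stmt_5 (d c : ℕ) (hd : 1 ≤ d)
    (H : Matrix (Fin d) (Fin d) ℂ) (hH : H.IsHermitian)
    (Q : Fin c → Matrix (Fin d) (Fin d) ℂ) (hQ : ∀ i, (Q i).IsHermitian)
    (q : Fin c → ℝ) (T : ℝ) (hT : 0 < T) (μ : Fin c → ℝ) (i : Fin c) :
    HasDerivAt
      (fun t : ℝ => ∑ k, Function.update μ i t k * q k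
        - T * Real.log (partitionZ H Q T (Function.update μ i t)))
      (q i - (Matrix.trace (Q i * thermalState H Q T μ)).re)
      (μ i) := by
  haveI hdNe : Nonempty (Fin d) := Fin.pos_iff_nonempty.mp hd
  have hT0 : T ≠ 0 := ne_of_gt hT
  set Bc : Matrix (Fin d) (Fin d) ℂ := T⁻¹ • Q i with hBc
  set A : Matrix (Fin d) (Fin d) ℂ := ((-(T⁻¹) : ℂ) • (H - muDotQ Q μ)) - μ i • Bc with hA
  have key : ∀ t : ℝ, ((-(T⁻¹) : ℂ) • (H - muDotQ Q (Function.update μ i t))) = A + t • Bc := by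
    intro t
    rw [aux_muDotQ_update, hA, hBc]
    match_scalars <;> simp only [Algebra.cast, Complex.coe_algebraMap] <;> push_cast <;> ring
  have hAmu : A + (μ i : ℝ) • Bc = (-(T⁻¹) : ℂ) • (H - muDotQ Q μ) := by
    rw [← key (μ i), Function.update_eq_self]
  set Z : ℝ := partitionZ H Q T μ with hZdef
  have hZpos : 0 < Z := aux_partitionZ_pos hd hH hQ μ
  set E₀ : Matrix (Fin d) (Fin d) ℂ :=
    NormedSpace.exp ((-(T⁻¹) : ℂ) • (H - muDotQ Q μ)) with hE₀
  have hG : HasDerivAt (fun t : ℝ => ((NormedSpace.exp (A + t • Bc)).trace))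
      ((Bc * E₀).trace) (μ i) := by
    have h := aux_trace_exp_hasDerivAt A Bc (μ i)
    rwa [hAmu] at h
  have hGre : HasDerivAt (fun t : ℝ => ((NormedSpace.exp (A + t • Bc)).trace).re)
      (((Bc * E₀).trace).re) (μ i) :=
    Complex.reCLM.hasFDerivAt.comp_hasDerivAt _ hG
  have hZfun : ∀ t : ℝ, partitionZ H Q T (Function.update μ i t)
      = ((NormedSpace.exp (A + t • Bc)).trace).re := by
    intro t
    unfold partitionZ
    rw [key t]
  have hZmu : ((NormedSpace.exp (A + (μ i : ℝ) • Bc)).trace).re = Z := by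
    rw [hAmu]; rfl
  have hlog : HasDerivAt
      (fun t : ℝ => Real.log (partitionZ H Q T (Function.update μ i t)))
      ((((Bc * E₀).trace).re) / Z) (μ i) := by
    have h := hGre.log (by rw [hZmu]; exact ne_of_gt hZpos)
    rw [hZmu] at h
    refine h.congr_of_eventuallyEq ?_
    filter_upwards with t
    rw [hZfun t]
  have hlin : HasDerivAt (fun t : ℝ => ∑ k, Function.update μ i t k * q k) (q i) (μ i) := by
    have hfe : (fun t : ℝ => ∑ k, Function.update μ i t k * q k)
        = fun t : ℝ => t * q i + ∑ k ∈ Finset.univ.erase i, μ k * q k := by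
      funext t
      rw [← Finset.add_sum_erase _ _ (Finset.mem_univ i), Function.update_self]
      congr 1
      exact Finset.sum_congr rfl fun k hk => by
        rw [Function.update_of_ne (Finset.ne_of_mem_erase hk)]
    rw [hfe]
    simpa using ((hasDerivAt_id (μ i)).mul_const (q i)).add_const (∑ k ∈ Finset.univ.erase i, μ k * q k)
  have hmain : HasDerivAt (fun t : ℝ => ∑ k, Function.update μ i t k * q k
      - T * Real.log (partitionZ H Q T (Function.update μ i t))) _ (μ i) :=
    hlin.sub (hlog.const_mul T)
  convert hmain using 1
  unfold thermalState
  rw [← hE₀, ← hZdef]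
  have h1 : (Q i * ((Z : ℂ))⁻¹ • E₀).trace = ((Z : ℂ))⁻¹ * (Q i * E₀).trace := by
    rw [Matrix.mul_smul, Matrix.trace_smul, smul_eq_mul]
  have h2 : (Bc * E₀).trace = T⁻¹ • (Q i * E₀).trace := by
    rw [hBc, Matrix.smul_mul, Matrix.trace_smul]
  rw [h1, h2]
  set w : ℂ := (Q i * E₀).trace with hw
  have h3 : (T⁻¹ • w).re = T⁻¹ * w.re := by
    rw [Complex.real_smul, Complex.ofReal_inv]
    simp [Complex.mul_re]
  have h4 : (((Z : ℂ))⁻¹ * w).re = Z⁻¹ * w.re := by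
    rw [← Complex.ofReal_inv]
    simp [Complex.mul_re]
  rw [h3, h4]
  have hZ0 : Z ≠ 0 := ne_of_gt hZpos
  field_simp
end

section
/- For every T > 0, every μ ∈ ℝ^c, and every i ∈ [c], the partial derivative of the partition function satisfies ∂Z_T(μ)/∂μ_i = (1/T)·Tr[Q_i exp(−(H − μ·Q)/T)]. -/
open Matrix MeasureTheory
open scoped ComplexOrder

set_option maxHeartbeats 2000000 in
open NormedSpace in
open scoped Nat in
/-- Key analytic lemma: derivative of `t ↦ Tr exp(C + t B)`. -/
theorem trace_exp_hasDerivAt_aux {d : ℕ} (hd : 1 ≤ d)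
    (C B : Matrix (Fin d) (Fin d) ℂ) (t₀ : ℝ) :
    HasDerivAt (fun t : ℝ => Matrix.trace (NormedSpace.exp (C + (t : ℂ) • B)))
      (Matrix.trace (B * NormedSpace.exp (C + (t₀ : ℂ) • B))) t₀ := by
  classical
  haveI : Nonempty (Fin d) := Fin.pos_iff_nonempty.mp hd
  letI : SeminormedRing (Matrix (Fin d) (Fin d) ℂ) := Matrix.linftyOpSemiNormedRing
  letI : NormedRing (Matrix (Fin d) (Fin d) ℂ) := Matrix.linftyOpNormedRing
  letI : NormedAlgebra ℂ (Matrix (Fin d) (Fin d) ℂ) := Matrix.linftyOpNormedAlgebra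
  letI : NormedAlgebra ℝ (Matrix (Fin d) (Fin d) ℂ) := Matrix.linftyOpNormedAlgebra
  letI : NormOneClass (Matrix (Fin d) (Fin d) ℂ) := Matrix.linfty_opNormOneClass
  haveI : CompleteSpace (Matrix (Fin d) (Fin d) ℂ) := FiniteDimensional.complete ℂ _
  set M : ℝ → Matrix (Fin d) (Fin d) ℂ := fun t => C + (t : ℂ) • B with hMdef
  -- basic derivative of M
  have hM : ∀ t : ℝ, HasDerivAt M B t := by
    intro t
    have : M = fun t : ℝ => C + t • B := by
      funext s; simp [hMdef, Complex.coe_smul]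
    rw [this]
    refine (((hasDerivAt_id t).smul_const B).const_add C).congr_deriv ?_
    simp
  -- trace entry bound
  have htr : ∀ X : Matrix (Fin d) (Fin d) ℂ, ‖Matrix.trace X‖ ≤ d * ‖X‖ := by
    intro X
    have hentry : ∀ i : Fin d, ‖X i i‖ ≤ ‖X‖ := by
      intro i
      have h1 : ‖X i i‖₊ ≤ ∑ j, ‖X i j‖₊ :=
        Finset.single_le_sum (f := fun j => ‖X i j‖₊) (fun j _ => zero_le) (Finset.mem_univ i)
      have h2 : (∑ j, ‖X i j‖₊) ≤ Finset.univ.sup fun i : Fin d => ∑ j, ‖X i j‖₊ :=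
        Finset.le_sup (f := fun i : Fin d => ∑ j, ‖X i j‖₊) (Finset.mem_univ i)
      have h3 : ‖X‖ = ((Finset.univ.sup fun i : Fin d => ∑ j, ‖X i j‖₊ : NNReal) : ℝ) :=
        Matrix.linfty_opNorm_def X
      rw [h3]
      exact_mod_cast h1.trans h2
    calc ‖Matrix.trace X‖ ≤ ∑ i, ‖X i i‖ := norm_sum_le _ _
      _ ≤ ∑ _i : Fin d, ‖X‖ := Finset.sum_le_sum fun i _ => hentry i
      _ = d * ‖X‖ := by simp [mul_comm]
  -- derivative of powers
  have hpow : ∀ (n : ℕ) (t : ℝ), HasDerivAt (fun s : ℝ => M s ^ n)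
      (∑ k ∈ Finset.range n, M t ^ k * B * M t ^ (n - 1 - k)) t := by
    intro n
    induction n with
    | zero =>
      intro t
      simp only [pow_zero, Finset.range_zero, Finset.sum_empty]
      exact hasDerivAt_const t (1 : Matrix (Fin d) (Fin d) ℂ)
    | succ n ih =>
      intro t
      have h1 := (ih t).mul (hM t)
      have h2 : ((fun s : ℝ => M s ^ n) * M) = fun s : ℝ => M s ^ (n + 1) := by
        funext s; show M s ^ n * M s = _; rw [← pow_succ]
      rw [h2] at h1
      refine h1.congr_deriv (Eq.symm ?_)
      rw [Finset.sum_range_succ, Finset.sum_mul]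
      congr 1
      · refine Finset.sum_congr rfl fun k hk => ?_
        rw [Finset.mem_range] at hk
        have he : n + 1 - 1 - k = (n - 1 - k) + 1 := by omega
        rw [he, pow_succ, ← mul_assoc]
      · simp [pow_succ]
  -- trace as a continuous linear map
  have htr' : ∀ X : Matrix (Fin d) (Fin d) ℂ,
      ‖(Matrix.traceLinearMap (Fin d) ℝ ℂ) X‖ ≤ d * ‖X‖ := htr
  set Φ : Matrix (Fin d) (Fin d) ℂ →L[ℝ] ℂ :=
    LinearMap.mkContinuous (Matrix.traceLinearMap (Fin d) ℝ ℂ) d htr' with hΦdef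
  have hΦ : ∀ X, Φ X = Matrix.trace X := fun X => rfl
  -- the series terms and their derivatives
  set g : ℕ → ℝ → ℂ := fun n t => (n ! : ℂ)⁻¹ • Matrix.trace (M t ^ n) with hgdef
  set g' : ℕ → ℝ → ℂ :=
    fun n t => (n ! : ℂ)⁻¹ • ((n : ℂ) • Matrix.trace (B * M t ^ (n - 1))) with hg'def
  have hg : ∀ (n : ℕ) (t : ℝ), HasDerivAt (g n) (g' n t) t := by
    intro n t
    have h1 : HasDerivAt (fun s => Matrix.trace (M s ^ n))
        ((n : ℂ) • Matrix.trace (B * M t ^ (n - 1))) t := by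
      have h2 := Φ.hasFDerivAt.comp_hasDerivAt t (hpow n t)
      have h3 : Φ (∑ k ∈ Finset.range n, M t ^ k * B * M t ^ (n - 1 - k))
          = (n : ℂ) • Matrix.trace (B * M t ^ (n - 1)) := by
        rw [hΦ, Matrix.trace_sum]
        have h4 : ∀ k ∈ Finset.range n,
            Matrix.trace (M t ^ k * B * M t ^ (n - 1 - k))
              = Matrix.trace (B * M t ^ (n - 1)) := by
          intro k hk
          rw [Finset.mem_range] at hk
          rw [Matrix.trace_mul_cycle, ← pow_add, Matrix.trace_mul_comm]
          have he : n - 1 - k + k = n - 1 := by omega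
          rw [he]
        rw [Finset.sum_congr rfl h4, Finset.sum_const, Finset.card_range, ← Nat.cast_smul_eq_nsmul ℂ]
      rw [← h3]
      exact h2
    exact h1.const_smul ((n ! : ℂ)⁻¹)
  -- uniform bound on derivatives on the ball of radius 1 around t₀
  set R : ℝ := ‖C‖ + (|t₀| + 1) * ‖B‖ with hRdef
  have hR0 : 0 ≤ R := by positivity
  set u : ℕ → ℝ := fun n => (d * ‖B‖) * ((n : ℝ) * R ^ (n - 1) / n !) with hudef
  have hMnorm : ∀ t ∈ Metric.ball t₀ 1, ‖M t‖ ≤ R := by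
    intro t ht
    have h1 : |t| ≤ |t₀| + 1 := by
      rw [Metric.mem_ball, Real.dist_eq] at ht
      have := abs_sub_abs_le_abs_sub t t₀
      linarith
    have h2 : ‖M t‖ ≤ ‖C‖ + ‖(t : ℂ) • B‖ := norm_add_le _ _
    have h3 : ‖(t : ℂ) • B‖ = |t| * ‖B‖ := by
      rw [norm_smul, Complex.norm_real, Real.norm_eq_abs]
    rw [h3] at h2
    have : |t| * ‖B‖ ≤ (|t₀| + 1) * ‖B‖ := by
      apply mul_le_mul_of_nonneg_right h1 (norm_nonneg _)
    rw [hRdef]; linarith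
  have hbound : ∀ (n : ℕ) (t : ℝ), t ∈ Metric.ball t₀ 1 → ‖g' n t‖ ≤ u n := by
    intro n t ht
    have h1 : ‖g' n t‖ = (n ! : ℝ)⁻¹ * ((n : ℝ) * ‖Matrix.trace (B * M t ^ (n - 1))‖) := by
      rw [hg'def]
      simp only [norm_smul, Complex.norm_natCast]
      congr 1
      simp [Complex.norm_natCast]
    have h2 : ‖Matrix.trace (B * M t ^ (n - 1))‖ ≤ d * (‖B‖ * R ^ (n - 1)) := by
      refine (htr _).trans ?_
      have h3 : ‖B * M t ^ (n - 1)‖ ≤ ‖B‖ * ‖M t‖ ^ (n - 1) :=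
        (norm_mul_le _ _).trans (by gcongr; exact norm_pow_le _ _)
      have h4 : ‖M t‖ ^ (n - 1) ≤ R ^ (n - 1) :=
        pow_le_pow_left₀ (norm_nonneg _) (hMnorm t ht) _
      have : ‖B * M t ^ (n - 1)‖ ≤ ‖B‖ * R ^ (n - 1) :=
        h3.trans (by gcongr)
      exact mul_le_mul_of_nonneg_left this (by positivity)
    rw [h1, hudef]
    have hn : (0:ℝ) ≤ (n:ℝ) := Nat.cast_nonneg n
    have hfac : (0:ℝ) < (n ! : ℝ) := by exact_mod_cast Nat.factorial_pos n
    calc (n ! : ℝ)⁻¹ * ((n : ℝ) * ‖Matrix.trace (B * M t ^ (n - 1))‖)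
        ≤ (n ! : ℝ)⁻¹ * ((n : ℝ) * (d * (‖B‖ * R ^ (n - 1)))) := by
          gcongr
      _ = (d * ‖B‖) * ((n : ℝ) * R ^ (n - 1) / n !) := by ring
  have hu : Summable u := by
    have hS : Summable (fun n : ℕ => (d * ‖B‖) * ((2 * max 1 R) ^ n / n !)) :=
      (Real.summable_pow_div_factorial (2 * max 1 R)).mul_left _
    refine Summable.of_nonneg_of_le (fun n => ?_) (fun n => ?_) hS
    · rw [hudef]; positivity
    · rw [hudef]
      have h1 : (n : ℝ) * R ^ (n - 1) ≤ (2 * max 1 R) ^ n := by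
        have h2 : (n : ℝ) ≤ 2 ^ n := by
          exact_mod_cast (Nat.lt_two_pow_self (n := n)).le
        have h3 : R ^ (n - 1) ≤ (max 1 R) ^ n := by
          calc R ^ (n - 1) ≤ (max 1 R) ^ (n - 1) :=
                pow_le_pow_left₀ hR0 (le_max_right _ _) _
            _ ≤ (max 1 R) ^ n := pow_le_pow_right₀ (le_max_left _ _) (Nat.sub_le _ _)
        calc (n : ℝ) * R ^ (n - 1) ≤ 2 ^ n * (max 1 R) ^ n := by
              apply mul_le_mul h2 h3 (by positivity) (by positivity)
          _ = (2 * max 1 R) ^ n := (mul_pow _ _ _).symm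
      have hfac : (0:ℝ) < (n ! : ℝ) := by exact_mod_cast Nat.factorial_pos n
      have h4 : (n : ℝ) * R ^ (n - 1) / n ! ≤ (2 * max 1 R) ^ n / n ! :=
        div_le_div_of_nonneg_right h1 hfac.le |>.trans_eq rfl
      exact mul_le_mul_of_nonneg_left h4 (by positivity)
  -- summability of the series at t₀
  have hsumM : ∀ t : ℝ, Summable fun n : ℕ => (n ! : ℂ)⁻¹ • M t ^ n := fun t =>
    expSeries_summable' (𝕂 := ℂ) (M t)
  have hg0 : Summable fun n => g n t₀ := by
    have h1 := (hsumM t₀).map Φ Φ.continuous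
    have h2 : (Φ ∘ fun n : ℕ => (n ! : ℂ)⁻¹ • M t₀ ^ n) = fun n => g n t₀ := by
      funext n
      simp only [Function.comp_apply, hΦ, hgdef, Matrix.trace_smul]
    rwa [h2] at h1
  -- the function equals the tsum of g
  have hfun : ∀ t : ℝ, Matrix.trace (NormedSpace.exp (C + (t : ℂ) • B)) = ∑' n, g n t := by
    intro t
    have h1 : NormedSpace.exp (M t) = ∑' n : ℕ, (n ! : ℂ)⁻¹ • M t ^ n := by
      rw [NormedSpace.exp_eq_tsum ℂ]
    have h2 := Φ.map_tsum (hsumM t)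
    rw [← hΦ, h1, h2]
    refine tsum_congr fun n => ?_
    simp only [hΦ, hgdef, Matrix.trace_smul]
  -- apply the series differentiation theorem
  have key := hasDerivAt_tsum_of_isPreconnected hu Metric.isOpen_ball
    (convex_ball t₀ 1).isPreconnected (fun n t ht => hg n t)
    hbound (Metric.mem_ball_self one_pos) hg0 (Metric.mem_ball_self one_pos)
  -- identify the derivative value
  have hgsum : Summable fun n => g' n t₀ :=
    Summable.of_norm_bounded hu fun n => hbound n t₀ (Metric.mem_ball_self one_pos)
  have hval : (∑' n, g' n t₀) = Matrix.trace (B * NormedSpace.exp (C + (t₀ : ℂ) • B)) := by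
    rw [Summable.tsum_eq_zero_add hgsum]
    have h0 : g' 0 t₀ = 0 := by simp [hg'def]
    rw [h0, zero_add]
    have h1 : ∀ n : ℕ, g' (n + 1) t₀ = (n ! : ℂ)⁻¹ • Matrix.trace (B * M t₀ ^ n) := by
      intro n
      rw [hg'def]
      simp only [Nat.add_sub_cancel]
      rw [smul_smul]
      congr 1
      have hne : ((n : ℂ) + 1) ≠ 0 := Nat.cast_add_one_ne_zero n
      have hfacne : ((n ! : ℕ) : ℂ) ≠ 0 := by exact_mod_cast (Nat.factorial_pos n).ne'
      rw [Nat.factorial_succ]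
      push_cast
      field_simp
    simp only [h1]
    -- now ∑' n, (n!)⁻¹ • trace (B * M t₀ ^ n) = trace (B * exp (M t₀))
    have h2 : NormedSpace.exp (M t₀) = ∑' n : ℕ, (n ! : ℂ)⁻¹ • M t₀ ^ n := by
      rw [NormedSpace.exp_eq_tsum ℂ]
    have hmul : Summable fun n : ℕ => B * ((n ! : ℂ)⁻¹ • M t₀ ^ n) := by
      have := (hsumM t₀).map (ContinuousLinearMap.mul ℂ (Matrix (Fin d) (Fin d) ℂ) B)
        (ContinuousLinearMap.mul ℂ (Matrix (Fin d) (Fin d) ℂ) B).continuous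
      simp [Function.comp_def, ContinuousLinearMap.mul_apply'] at this ⊢
      exact this
    calc (∑' n : ℕ, (n ! : ℂ)⁻¹ • Matrix.trace (B * M t₀ ^ n))
        = ∑' n : ℕ, Matrix.trace (B * ((n ! : ℂ)⁻¹ • M t₀ ^ n)) := by
          refine tsum_congr fun n => ?_
          rw [mul_smul_comm, Matrix.trace_smul]
      _ = Matrix.trace (∑' n : ℕ, B * ((n ! : ℂ)⁻¹ • M t₀ ^ n)) := by
          have h4 := Φ.map_tsum hmul
          simp only [hΦ] at h4
          exact h4.symm
      _ = Matrix.trace (B * NormedSpace.exp (M t₀)) := by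
          congr 1
          have h5 := (ContinuousLinearMap.mul ℂ (Matrix (Fin d) (Fin d) ℂ) B).map_tsum (hsumM t₀)
          simp only [ContinuousLinearMap.mul_apply'] at h5
          rw [h2]
          exact h5.symm
  -- assemble
  have hfeq : (fun t : ℝ => Matrix.trace (NormedSpace.exp (C + (t : ℂ) • B)))
      = fun t => ∑' n, g n t := funext hfun
  rw [hfeq, ← hval]
  exact key

set_option maxHeartbeats 1000000 in
/-- `∂Z_T(μ)/∂μ_i = (1/T)·Tr[Q_i exp(−(H − μ·Q)/T)]`. -/
theorem stmt_6 (d c : ℕ) (hd : 1 ≤ d)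
    (H : Matrix (Fin d) (Fin d) ℂ) (hH : H.IsHermitian)
    (Q : Fin c → Matrix (Fin d) (Fin d) ℂ) (hQ : ∀ i, (Q i).IsHermitian)
    (T : ℝ) (hT : 0 < T) (μ : Fin c → ℝ) (i : Fin c) :
    HasDerivAt
      (fun t : ℝ => partitionZ H Q T (Function.update μ i t))
      (T⁻¹ * (Matrix.trace (Q i *
        NormedSpace.exp ((-(T⁻¹) : ℂ) • (H - muDotQ Q μ)))).re)
      (μ i) := by
  classical
  set B : Matrix (Fin d) (Fin d) ℂ := ((T⁻¹ : ℝ) : ℂ) • Q i with hBdef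
  set C : Matrix (Fin d) (Fin d) ℂ :=
    (-(T⁻¹) : ℂ) • (H - ∑ j ∈ Finset.univ.erase i, ((μ j : ℝ) : ℂ) • Q j) with hCdef
  have hdec : ∀ t : ℝ, (-(T⁻¹) : ℂ) • (H - muDotQ Q (Function.update μ i t))
      = C + (t : ℂ) • B := by
    intro t
    have hsum : muDotQ Q (Function.update μ i t)
        = (t : ℂ) • Q i + ∑ j ∈ Finset.univ.erase i, ((μ j : ℝ) : ℂ) • Q j := by
      rw [muDotQ, ← Finset.add_sum_erase _ _ (Finset.mem_univ i)]
      congr 1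
      · rw [Function.update_self]
      · refine Finset.sum_congr rfl fun j hj => ?_
        rw [Function.update_of_ne (Finset.mem_erase.mp hj).1]
    rw [hsum, hBdef, hCdef]
    push_cast
    module
  have key := trace_exp_hasDerivAt_aux hd C B (μ i)
  have hre : HasDerivAt
      (fun t : ℝ => (Matrix.trace (NormedSpace.exp (C + (t : ℂ) • B))).re)
      ((Matrix.trace (B * NormedSpace.exp (C + ((μ i : ℝ) : ℂ) • B))).re) (μ i) :=
    Complex.reCLM.hasFDerivAt.comp_hasDerivAt (μ i) key
  have hfun : (fun t : ℝ => partitionZ H Q T (Function.update μ i t))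
      = fun t : ℝ => (Matrix.trace (NormedSpace.exp (C + (t : ℂ) • B))).re := by
    funext t; rw [partitionZ, hdec t]
  rw [hfun]
  have h1 : C + ((μ i : ℝ) : ℂ) • B = (-(T⁻¹) : ℂ) • (H - muDotQ Q μ) := by
    have := hdec (μ i)
    rw [Function.update_eq_self] at this
    exact this.symm
  have h2 : (Matrix.trace (B * NormedSpace.exp (C + ((μ i : ℝ) : ℂ) • B))).re
      = T⁻¹ * (Matrix.trace (Q i * NormedSpace.exp
          ((-(T⁻¹) : ℂ) • (H - muDotQ Q μ)))).re := by
    rw [h1, hBdef, smul_mul_assoc, Matrix.trace_smul, smul_eq_mul, Complex.re_ofReal_mul]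
  rw [← h2]
  exact hre
end

section
/- Duhamel's formula for the parameterized matrix exponential: for every T > 0, every μ ∈ ℝ^c, and every i ∈ [c], the μ_i-partial derivative of the matrix exp(−(H − μ·Q)/T) exists and equals (1/T) ∫_0^1 exp(−(H − μ·Q)(1−s)/T) · Q_i · exp(−(H − μ·Q)s/T) ds. -/
open Matrix MeasureTheory
open scoped ComplexOrder

attribute [local instance] Matrix.frobeniusNormedAddCommGroup Matrix.frobeniusNormedSpace
attribute [local instance] Matrix.frobeniusNormedRing Matrix.frobeniusNormedAlgebra

section Aux
open NormedSpace
variable {dd : ℕ}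

private lemma expR_eq (A : Matrix (Fin dd) (Fin dd) ℂ) : exp A = exp A := by
  rfl

private lemma duhamel (M B : Matrix (Fin dd) (Fin dd) ℂ) :
    HasDerivAt (fun u : ℝ => exp (M + u • B))
      (∫ s in (0:ℝ)..1, exp ((1 - s) • M) * B * exp (s • M)) 0 := by
  set Ψ : ℝ → Matrix (Fin dd) (Fin dd) ℂ := fun u =>
    ∫ s in (0:ℝ)..1, exp ((1 - s) • M) * B * exp (s • (M + u • B)) with hΨ
  -- key identity
  have key : ∀ u : ℝ, exp (M + u • B) = exp M + u • Ψ u := by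
    intro u
    set N := M + u • B with hN
    have hderiv : ∀ s : ℝ,
        HasDerivAt (fun s : ℝ => exp ((1 - s) • M) * exp (s • N))
          (u • (exp ((1 - s) • M) * B * exp (s • N))) s := by
      intro s
      have h1 : HasDerivAt (fun s : ℝ => exp ((1 - s) • M))
          ((-1 : ℝ) • (exp ((1 - s) • M) * M)) s := by
        have hin : HasDerivAt (fun s : ℝ => 1 - s) (-1 : ℝ) s := by
          simpa using (hasDerivAt_id s).const_sub 1
        exact (hasDerivAt_exp_smul_const (𝕂 := ℝ) M (1 - s)).scomp s hin |>.congr_deriv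
          (by simp; rfl)
      have h2 : HasDerivAt (fun s : ℝ => exp (s • N)) (N * exp (s • N)) s :=
        hasDerivAt_exp_smul_const' (𝕂 := ℝ) N s
      have := h1.mul h2
      refine this.congr_deriv ?_
      rw [hN]
      simp only [neg_one_smul, neg_mul, mul_add, add_mul, smul_mul_assoc, mul_smul_comm,
        mul_assoc]
      abel
    have hcont : Continuous fun s : ℝ =>
        u • (exp ((1 - s) • M) * B * exp (s • N)) := by
      refine Continuous.smul (f := fun _ : ℝ => u) continuous_const ?_
      exact ((exp_continuous.comp ((continuous_const.sub continuous_id).smul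
        continuous_const)).mul continuous_const).mul
        (exp_continuous.comp (continuous_id.smul continuous_const))
    have hftc := intervalIntegral.integral_eq_sub_of_hasDerivAt
      (f := fun s : ℝ => exp ((1 - s) • M) * exp (s • N))
      (fun s _ => hderiv s) (hcont.intervalIntegrable 0 1)
    simp only [sub_zero, zero_smul, one_smul, sub_self, exp_zero, one_mul, mul_one] at hftc
    rw [intervalIntegral.integral_smul] at hftc
    calc exp N = exp M + (exp N - exp M) := by abel
      _ = exp M + u • Ψ u := by rw [← hftc]
  -- continuity of Ψ
  have hΨc : Continuous Ψ := by
    apply intervalIntegral.continuous_parametric_intervalIntegral_of_continuous'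
    apply Continuous.mul
    · apply Continuous.mul
      · exact exp_continuous.comp ((continuous_const.sub continuous_snd).smul continuous_const)
      · exact continuous_const
    · exact exp_continuous.comp (continuous_snd.smul (continuous_const.add
        (continuous_fst.smul continuous_const)))
  -- conclude
  have hΨ0 : Ψ 0 = ∫ s in (0:ℝ)..1, exp ((1 - s) • M) * B * exp (s • M) := by
    simp [hΨ]
  rw [← hΨ0]
  refine hasDerivAt_iff_tendsto_slope.mpr ?_
  have hev : slope (fun u : ℝ => exp (M + u • B)) 0 =ᶠ[nhdsWithin 0 {(0:ℝ)}ᶜ] Ψ := by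
    filter_upwards [self_mem_nhdsWithin] with u hu
    have hu' : u ≠ 0 := hu
    rw [slope_def_module]
    rw [key u, key 0]
    simp [smul_smul, inv_mul_cancel₀ hu']
  exact Filter.Tendsto.congr' hev.symm ((hΨc.tendsto 0).mono_left nhdsWithin_le_nhds)

end Aux

open NormedSpace in
private lemma rsmul_eq {dd : ℕ} (r : ℝ) (A : Matrix (Fin dd) (Fin dd) ℂ) :
    r • A = ((r : ℂ)) • A := by
  ext a b
  simp [Matrix.smul_apply, Complex.real_smul, smul_eq_mul]


/-- Duhamel's formula for the `μ_i`-partial derivative of the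
parameterized matrix exponential `exp(−(H − μ·Q)/T)`. -/
theorem stmt_7 (d c : ℕ) (hd : 1 ≤ d)
    (H : Matrix (Fin d) (Fin d) ℂ) (hH : H.IsHermitian)
    (Q : Fin c → Matrix (Fin d) (Fin d) ℂ) (hQ : ∀ i, (Q i).IsHermitian)
    (T : ℝ) (hT : 0 < T) (μ : Fin c → ℝ) (i : Fin c) :
    HasDerivAt
      (fun t : ℝ =>
        NormedSpace.exp ((-(T⁻¹) : ℂ) • (H - muDotQ Q (Function.update μ i t))))
      ((T⁻¹ : ℂ) • ∫ s in (0:ℝ)..1,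
        NormedSpace.exp ((-((1 - s) * T⁻¹) : ℂ) • (H - muDotQ Q μ)) * Q i *
          NormedSpace.exp ((-(s * T⁻¹) : ℂ) • (H - muDotQ Q μ)))
      (μ i) := by
  set X : Matrix (Fin d) (Fin d) ℂ := H - muDotQ Q μ with hX
  set M : Matrix (Fin d) (Fin d) ℂ := ((-(T⁻¹) : ℂ)) • X with hM
  set B : Matrix (Fin d) (Fin d) ℂ := (T⁻¹ : ℝ) • Q i with hB
  -- update identity
  have hupd : ∀ t : ℝ, muDotQ Q (Function.update μ i t)
      = muDotQ Q μ + ((t - μ i : ℝ) : ℂ) • Q i := by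
    intro t
    have : muDotQ Q (Function.update μ i t) - muDotQ Q μ = ((t - μ i : ℝ) : ℂ) • Q i := by
      unfold muDotQ
      rw [← Finset.sum_sub_distrib, Finset.sum_eq_single i]
      · simp [Function.update_self, ← sub_smul, ← Complex.ofReal_sub]
      · intro j _ hj
        simp [Function.update_of_ne hj]
      · simp
    linear_combination (norm := module) this
  -- the function rewritten
  have hfun : ∀ t : ℝ, (-(T⁻¹) : ℂ) • (H - muDotQ Q (Function.update μ i t))
      = M + (t - μ i) • B := by
    intro t
    rw [hupd t, hB, hM, hX]
    ext a b
    simp only [Matrix.smul_apply, Matrix.add_apply, Matrix.sub_apply, smul_eq_mul,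
      Complex.real_smul]
    push_cast
    ring
  -- the derivative value rewritten
  have hint : (∫ s in (0:ℝ)..1, NormedSpace.exp ((1 - s) • M) * B * NormedSpace.exp (s • M))
      = (T⁻¹ : ℂ) • ∫ s in (0:ℝ)..1,
        NormedSpace.exp ((-((1 - s) * T⁻¹) : ℂ) • X) * Q i * NormedSpace.exp ((-(s * T⁻¹) : ℂ) • X) := by
    rw [← intervalIntegral.integral_smul]
    apply intervalIntegral.integral_congr
    intro s _
    show NormedSpace.exp ((1 - s) • M) * B * NormedSpace.exp (s • M)
      = (T⁻¹ : ℂ) • (NormedSpace.exp ((-((1 - s) * T⁻¹) : ℂ) • X) * Q i * NormedSpace.exp ((-(s * T⁻¹) : ℂ) • X))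
    have e1 : (1 - s) • M = ((-((1 - s) * T⁻¹) : ℂ)) • X := by
      rw [hM, rsmul_eq, smul_smul]
      congr 1
      push_cast
      ring
    have e2 : s • M = ((-(s * T⁻¹) : ℂ)) • X := by
      rw [hM, rsmul_eq, smul_smul]
      congr 1
      push_cast
      ring
    rw [e1, e2, hB, rsmul_eq]
    simp only [smul_mul_assoc, mul_smul_comm]
    congr 1
    push_cast
    ring
  have hd0 := duhamel M B
  have hsub : HasDerivAt (fun t : ℝ => t - μ i) (1 : ℝ) (μ i) := by
    simpa using (hasDerivAt_id (μ i)).sub_const (μ i)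
  have hshift := HasDerivAt.scomp (μ i) (by rw [sub_self]; exact hd0) hsub
  rw [← hint]
  have hfd : (fun t : ℝ =>
      NormedSpace.exp ((-(T⁻¹) : ℂ) • (H - muDotQ Q (Function.update μ i t))))
      = fun t : ℝ => NormedSpace.exp (M + (t - μ i) • B) := by
    funext t
    rw [hfun t]
  rw [hfd]
  simp only [one_smul] at hshift
  exact hshift
end

section
/- Let f(μ) := μ·q − T ln Z_T(μ) for T > 0 and q ∈ ℝ^c. Then f is a concave function of μ on ℝ^c. -/
open Matrix MeasureTheory
open scoped ComplexOrder

section Stmt11Aux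

variable {d : ℕ}

-- exp of a Hermitian matrix via spectral data
lemma exp_herm {K : Matrix (Fin d) (Fin d) ℂ} (hK : K.IsHermitian) :
    NormedSpace.exp K =
      (hK.eigenvectorUnitary : Matrix (Fin d) (Fin d) ℂ) *
        Matrix.diagonal (fun k => Complex.exp (hK.eigenvalues k)) *
        star (hK.eigenvectorUnitary : Matrix (Fin d) (Fin d) ℂ) := by
  set U : Matrix (Fin d) (Fin d) ℂ := (hK.eigenvectorUnitary : Matrix (Fin d) (Fin d) ℂ)
  have hmem : U ∈ Matrix.unitaryGroup (Fin d) ℂ := hK.eigenvectorUnitary.2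
  have hUU : U * star U = 1 := (Matrix.mem_unitaryGroup_iff).mp hmem
  have hUinv : U⁻¹ = star U := Matrix.inv_eq_right_inv hUU
  have hU'U : star U * U = 1 := (Matrix.mem_unitaryGroup_iff').mp hmem
  have hunit : IsUnit U := ⟨⟨U, star U, hUU, hU'U⟩, rfl⟩
  conv_lhs => rw [hK.spectral_theorem, Unitary.conjStarAlgAut_apply]
  rw [← hUinv, Matrix.exp_conj U _ hunit, hUinv]
  congr 1
  congr 1
  rw [Matrix.exp_diagonal]
  congr 1
  funext k
  simp [Pi.exp_def, Function.comp, ← Complex.exp_eq_exp_ℂ]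

lemma trace_conj_unitary {U : Matrix (Fin d) (Fin d) ℂ}
    (hU : U ∈ Matrix.unitaryGroup (Fin d) ℂ) (M : Matrix (Fin d) (Fin d) ℂ) :
    Matrix.trace (U * M * star U) = Matrix.trace M := by
  rw [Matrix.trace_mul_cycle, (Matrix.mem_unitaryGroup_iff').mp hU, Matrix.one_mul]


lemma trace_exp_herm {K : Matrix (Fin d) (Fin d) ℂ} (hK : K.IsHermitian) :
    (Matrix.trace (NormedSpace.exp K)).re = ∑ k, Real.exp (hK.eigenvalues k) := by
  rw [exp_herm hK, trace_conj_unitary hK.eigenvectorUnitary.2, Matrix.trace_diagonal]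
  rw [Complex.re_sum]
  exact Finset.sum_congr rfl fun k _ => Complex.exp_ofReal_re _

lemma trace_exp_herm_pos (hd : 1 ≤ d) {K : Matrix (Fin d) (Fin d) ℂ} (hK : K.IsHermitian) :
    0 < (Matrix.trace (NormedSpace.exp K)).re := by
  rw [trace_exp_herm hK]
  have : Nonempty (Fin d) := ⟨⟨0, hd⟩⟩
  exact Finset.sum_pos (fun k _ => Real.exp_pos _) Finset.univ_nonempty

lemma trace_form {V U : Matrix (Fin d) (Fin d) ℂ}
    (hV : V ∈ Matrix.unitaryGroup (Fin d) ℂ) (p κ : Fin d → ℝ) :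
    (Matrix.trace ((V * Matrix.diagonal (fun j => (p j : ℂ)) * star V) *
        (U * Matrix.diagonal (fun k => (κ k : ℂ)) * star U))).re
      = ∑ j, ∑ k, p j * κ k * Complex.normSq ((star V * U) j k) := by
  set W : Matrix (Fin d) (Fin d) ℂ := star V * U with hW
  set P : Matrix (Fin d) (Fin d) ℂ := Matrix.diagonal (fun j => (p j : ℂ)) with hP
  set D : Matrix (Fin d) (Fin d) ℂ := Matrix.diagonal (fun k => (κ k : ℂ)) with hD
  have hVV : V * star V = 1 := (Matrix.mem_unitaryGroup_iff).mp hV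
  have key : (V * P * star V) * (U * D * star U) = V * (P * (W * D * star W)) * star V := by
    simp only [hW, Matrix.star_mul, star_star, Matrix.mul_assoc, hVV, Matrix.mul_one]
  rw [key, trace_conj_unitary hV]
  have entry : ∀ j, (P * (W * D * star W)) j j
      = ((p j : ℂ)) * ∑ k, ((κ k * Complex.normSq (W j k) : ℝ) : ℂ) := by
    intro j
    rw [hP, Matrix.diagonal_mul]
    congr 1
    rw [Matrix.mul_apply]
    refine Finset.sum_congr rfl fun k _ => ?_
    rw [hD, Matrix.mul_diagonal, Matrix.star_apply]
    push_cast
    rw [show W j k * (κ k : ℂ) * star (W j k) = (κ k : ℂ) * (W j k * star (W j k)) by ring]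
    rw [show star (W j k) = (starRingEnd ℂ) (W j k) from rfl, Complex.mul_conj]
  rw [Matrix.trace]
  simp only [Matrix.diag_apply, entry]
  rw [Complex.re_sum]
  refine Finset.sum_congr rfl fun j _ => ?_
  rw [← Complex.ofReal_sum]
  rw [← Complex.ofReal_mul, Complex.ofReal_re, Finset.mul_sum]
  exact Finset.sum_congr rfl fun k _ => by ring

lemma row_sum {W : Matrix (Fin d) (Fin d) ℂ} (hW : W ∈ Matrix.unitaryGroup (Fin d) ℂ)
    (j : Fin d) : ∑ k, Complex.normSq (W j k) = 1 := by
  have h := (Matrix.mem_unitaryGroup_iff).mp hW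
  have := congrArg (fun M => (M j j).re) h
  simp only [Matrix.mul_apply, Matrix.star_apply, Matrix.one_apply_eq, Complex.one_re] at this
  rw [← this, Complex.re_sum]
  refine Finset.sum_congr rfl fun k _ => ?_
  rw [show star (W j k) = (starRingEnd ℂ) (W j k) from rfl, Complex.mul_conj]
  simp

lemma col_sum {W : Matrix (Fin d) (Fin d) ℂ} (hW : W ∈ Matrix.unitaryGroup (Fin d) ℂ)
    (k : Fin d) : ∑ j, Complex.normSq (W j k) = 1 := by
  have h := (Matrix.mem_unitaryGroup_iff').mp hW
  have := congrArg (fun M => (M k k).re) h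
  simp only [Matrix.mul_apply, Matrix.star_apply, Matrix.one_apply_eq, Complex.one_re] at this
  rw [← this, Complex.re_sum]
  refine Finset.sum_congr rfl fun j _ => ?_
  rw [show star (W j k) = (starRingEnd ℂ) (W j k) from rfl, mul_comm, Complex.mul_conj]
  simp

example {V U : Matrix (Fin d) (Fin d) ℂ} (hV : V ∈ Matrix.unitaryGroup (Fin d) ℂ)
    (hU : U ∈ Matrix.unitaryGroup (Fin d) ℂ) : star V * U ∈ Matrix.unitaryGroup (Fin d) ℂ :=
  mul_mem (Unitary.star_mem hV) hU

-- scalar Klein inequality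
lemma scalar_klein {x a Z : ℝ} (hx : 0 ≤ x) (hZ : 0 < Z) :
    x * a - x * Real.log x ≤ Real.exp a / Z - x + x * Real.log Z := by
  rcases eq_or_lt_of_le hx with h | h
  · simp [← h]
    positivity
  · have hpos : 0 < Real.exp a / (Z * x) := by positivity
    have hlog := Real.log_le_sub_one_of_pos hpos
    rw [Real.log_div (Real.exp_ne_zero a) (by positivity), Real.log_exp,
      Real.log_mul (ne_of_gt hZ) (ne_of_gt h)] at hlog
    have := mul_le_mul_of_nonneg_left hlog (le_of_lt h)
    have hxne : x ≠ 0 := ne_of_gt h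
    calc x * a - x * Real.log x
        = x * (a - (Real.log Z + Real.log x)) + x * Real.log Z := by ring
      _ ≤ x * (Real.exp a / (Z * x) - 1) + x * Real.log Z := by
          exact add_le_add_left this _
      _ = Real.exp a / Z - x + x * Real.log Z := by
          field_simp

lemma klein {K : Matrix (Fin d) (Fin d) ℂ} (hK : K.IsHermitian)
    {V : Matrix (Fin d) (Fin d) ℂ} (hV : V ∈ Matrix.unitaryGroup (Fin d) ℂ)
    (p : Fin d → ℝ) (hp : ∀ j, 0 ≤ p j) (hp1 : ∑ j, p j = 1) :
    (Matrix.trace ((V * Matrix.diagonal (fun j => (p j : ℂ)) * star V) * K)).re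
      - ∑ j, p j * Real.log (p j)
      ≤ Real.log ((Matrix.trace (NormedSpace.exp K)).re) := by
  have hne : Nonempty (Fin d) := by
    rcases Nat.eq_zero_or_pos d with h | h
    · subst h; simp at hp1
    · exact ⟨⟨0, h⟩⟩
  set U : Matrix (Fin d) (Fin d) ℂ := (hK.eigenvectorUnitary : Matrix (Fin d) (Fin d) ℂ) with hU
  set κ : Fin d → ℝ := hK.eigenvalues with hκ
  set W : Matrix (Fin d) (Fin d) ℂ := star V * U with hWdef
  have hWmem : W ∈ Matrix.unitaryGroup (Fin d) ℂ :=
    mul_mem (Unitary.star_mem hV) hK.eigenvectorUnitary.2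
  set c : Fin d → Fin d → ℝ := fun j k => Complex.normSq (W j k) with hc
  have hcnn : ∀ j k, 0 ≤ c j k := fun j k => Complex.normSq_nonneg _
  set Z : ℝ := ∑ k, Real.exp (κ k) with hZdef
  have hZ : 0 < Z := Finset.sum_pos (fun k _ => Real.exp_pos _) Finset.univ_nonempty
  have hspec : K = U * Matrix.diagonal (fun k => ((κ k : ℝ) : ℂ)) * star U := hK.spectral_theorem.trans (Unitary.conjStarAlgAut_apply _ _)
  have hT1 : (Matrix.trace ((V * Matrix.diagonal (fun j => (p j : ℂ)) * star V) * K)).re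
      = ∑ j, ∑ k, p j * κ k * c j k := by
    conv_lhs => rw [hspec]
    exact trace_form hV p κ
  have hE : (∑ j, p j * Real.log (p j)) = ∑ j, ∑ k, c j k * (p j * Real.log (p j)) := by
    refine Finset.sum_congr rfl fun j _ => ?_
    rw [← Finset.sum_mul, row_sum hWmem j, one_mul]
  have key : (∑ j, ∑ k, p j * κ k * c j k) - ∑ j, p j * Real.log (p j)
      = ∑ j, ∑ k, c j k * (p j * κ k - p j * Real.log (p j)) := by
    rw [hE, ← Finset.sum_sub_distrib]
    refine Finset.sum_congr rfl fun j _ => ?_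
    rw [← Finset.sum_sub_distrib]
    exact Finset.sum_congr rfl fun k _ => by ring
  have hbound : ∑ j, ∑ k, c j k * (p j * κ k - p j * Real.log (p j))
      ≤ ∑ j, ∑ k, c j k * (Real.exp (κ k) / Z - p j + p j * Real.log Z) := by
    refine Finset.sum_le_sum fun j _ => Finset.sum_le_sum fun k _ => ?_
    exact mul_le_mul_of_nonneg_left (scalar_klein (hp j) hZ) (hcnn j k)
  have h1 : ∑ j, ∑ k, c j k * (Real.exp (κ k) / Z) = 1 := by
    rw [Finset.sum_comm]
    have : ∀ k, ∑ j, c j k * (Real.exp (κ k) / Z) = Real.exp (κ k) / Z := fun k => by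
      rw [← Finset.sum_mul, col_sum hWmem k, one_mul]
    rw [Finset.sum_congr rfl fun k _ => this k, ← Finset.sum_div, ← hZdef, div_self (ne_of_gt hZ)]
  have h2 : ∑ j, ∑ k, c j k * p j = 1 := by
    have : ∀ j, ∑ k, c j k * p j = p j := fun j => by
      rw [← Finset.sum_mul, row_sum hWmem j, one_mul]
    rw [Finset.sum_congr rfl fun j _ => this j, hp1]
  have h3 : ∑ j, ∑ k, c j k * (p j * Real.log Z) = Real.log Z := by
    have : ∀ j, ∑ k, c j k * (p j * Real.log Z) = p j * Real.log Z := fun j => by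
      rw [← Finset.sum_mul, row_sum hWmem j, one_mul]
    rw [Finset.sum_congr rfl fun j _ => this j, ← Finset.sum_mul, hp1, one_mul]
  have hsplit : ∑ j, ∑ k, c j k * (Real.exp (κ k) / Z - p j + p j * Real.log Z)
      = (∑ j, ∑ k, c j k * (Real.exp (κ k) / Z)) - (∑ j, ∑ k, c j k * p j)
        + ∑ j, ∑ k, c j k * (p j * Real.log Z) := by
    simp only [mul_sub, mul_add, Finset.sum_add_distrib, Finset.sum_sub_distrib]
  have hZtr : (Matrix.trace (NormedSpace.exp K)).re = Z := trace_exp_herm hK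
  rw [hZtr, hT1, key]
  calc ∑ j, ∑ k, c j k * (p j * κ k - p j * Real.log (p j))
      ≤ ∑ j, ∑ k, c j k * (Real.exp (κ k) / Z - p j + p j * Real.log Z) := hbound
    _ = 1 - 1 + Real.log Z := by rw [hsplit, h1, h2, h3]
    _ = Real.log Z := by ring

lemma gibbs_attains {K : Matrix (Fin d) (Fin d) ℂ} (hK : K.IsHermitian) (hne : Nonempty (Fin d)) :
    (Matrix.trace (((hK.eigenvectorUnitary : Matrix (Fin d) (Fin d) ℂ) *
        Matrix.diagonal (fun j => ((Real.exp (hK.eigenvalues j)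
            / (∑ k, Real.exp (hK.eigenvalues k)) : ℝ) : ℂ)) *
        star (hK.eigenvectorUnitary : Matrix (Fin d) (Fin d) ℂ)) * K)).re
      - ∑ j, (Real.exp (hK.eigenvalues j) / (∑ k, Real.exp (hK.eigenvalues k))) *
          Real.log (Real.exp (hK.eigenvalues j) / (∑ k, Real.exp (hK.eigenvalues k)))
      = Real.log ((Matrix.trace (NormedSpace.exp K)).re) := by
  set U : Matrix (Fin d) (Fin d) ℂ := (hK.eigenvectorUnitary : Matrix (Fin d) (Fin d) ℂ) with hU
  set κ : Fin d → ℝ := hK.eigenvalues with hκ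
  set Z : ℝ := ∑ k, Real.exp (κ k) with hZdef
  have hZ : 0 < Z := Finset.sum_pos (fun k _ => Real.exp_pos _) Finset.univ_nonempty
  set p : Fin d → ℝ := fun j => Real.exp (κ j) / Z with hpdef
  have hp1 : ∑ j, p j = 1 := by
    rw [hpdef]; rw [← Finset.sum_div, ← hZdef, div_self (ne_of_gt hZ)]
  have hU'U : star U * U = 1 := (Matrix.mem_unitaryGroup_iff').mp hK.eigenvectorUnitary.2
  have hspec : K = U * Matrix.diagonal (fun k => ((κ k : ℝ) : ℂ)) * star U := hK.spectral_theorem.trans (Unitary.conjStarAlgAut_apply _ _)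
  have hcollapse : (U * Matrix.diagonal (fun j => ((p j : ℝ) : ℂ)) * star U) * K
      = U * (Matrix.diagonal (fun j => ((p j : ℝ) : ℂ)) *
          Matrix.diagonal (fun k => ((κ k : ℝ) : ℂ))) * star U := by
    conv_lhs => rw [hspec]
    simp only [Matrix.mul_assoc]
    rw [show star U * (U * (Matrix.diagonal (fun k => ((κ k : ℝ) : ℂ)) * star U))
        = Matrix.diagonal (fun k => ((κ k : ℝ) : ℂ)) * star U by
      rw [← Matrix.mul_assoc, hU'U, Matrix.one_mul]]
  have htr : (Matrix.trace ((U * Matrix.diagonal (fun j => ((p j : ℝ) : ℂ)) * star U) * K)).re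
      = ∑ j, p j * κ j := by
    rw [hcollapse, trace_conj_unitary hK.eigenvectorUnitary.2, Matrix.diagonal_mul_diagonal,
      Matrix.trace_diagonal, Complex.re_sum]
    refine Finset.sum_congr rfl fun j _ => ?_
    rw [← Complex.ofReal_mul, Complex.ofReal_re]
  rw [htr, trace_exp_herm hK, ← hκ, ← hZdef]
  have hlogp : ∀ j, Real.log (p j) = κ j - Real.log Z := fun j => by
    rw [hpdef, Real.log_div (Real.exp_ne_zero _) (ne_of_gt hZ), Real.log_exp]
  calc (∑ j, p j * κ j) - ∑ j, p j * Real.log (p j)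
      = ∑ j, (p j * κ j - p j * (κ j - Real.log Z)) := by
        rw [← Finset.sum_sub_distrib]
        exact Finset.sum_congr rfl fun j _ => by rw [hlogp j]
    _ = ∑ j, p j * Real.log Z := Finset.sum_congr rfl fun j _ => by ring
    _ = Real.log Z := by rw [← Finset.sum_mul, hp1, one_mul]


end Stmt11Aux

/-- `f(μ) = μ·q − T ln Z_T(μ)` is concave on `ℝ^c`. -/
theorem stmt_11 (d c : ℕ) (hd : 1 ≤ d)
    (H : Matrix (Fin d) (Fin d) ℂ) (hH : H.IsHermitian)
    (Q : Fin c → Matrix (Fin d) (Fin d) ℂ) (hQ : ∀ i, (Q i).IsHermitian)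
    (q : Fin c → ℝ) (T : ℝ) (hT : 0 < T) :
    ConcaveOn ℝ Set.univ
      (fun μ : Fin c → ℝ => ∑ i, μ i * q i - T * Real.log (partitionZ H Q T μ)) := by
  have hdne : Nonempty (Fin d) := ⟨⟨0, hd⟩⟩
  refine ⟨convex_univ, fun μ _ ν _ a b ha hb hab => ?_⟩
  simp only [smul_eq_mul]
  -- Hermiticity
  have hmu : ∀ m, (muDotQ Q m).IsHermitian := fun m => by
    unfold muDotQ
    rw [Matrix.IsHermitian, Matrix.conjTranspose_sum]
    exact Finset.sum_congr rfl fun i _ => by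
      rw [Matrix.conjTranspose_smul, Complex.star_def, Complex.conj_ofReal, (hQ i).eq]
  have hKherm : ∀ m : Fin c → ℝ, ((-(T⁻¹) : ℂ) • (H - muDotQ Q m)).IsHermitian := fun m => by
    rw [Matrix.IsHermitian, Matrix.conjTranspose_smul]
    rw [show star (-(T⁻¹) : ℂ) = (-(T⁻¹) : ℂ) by
      rw [Complex.star_def, map_neg, Complex.conj_ofReal]]
    rw [(hH.sub (hmu m)).eq]
  -- affinity of K in μ
  have hmulin : muDotQ Q (a • μ + b • ν) = (a : ℂ) • muDotQ Q μ + (b : ℂ) • muDotQ Q ν := by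
    unfold muDotQ
    simp only [Finset.smul_sum, ← Finset.sum_add_distrib]
    refine Finset.sum_congr rfl fun i _ => ?_
    simp only [Pi.add_apply, Pi.smul_apply, smul_smul, smul_eq_mul]
    rw [← add_smul]
    congr 1
    push_cast
    ring
  have hKaff : (-(T⁻¹) : ℂ) • (H - muDotQ Q (a • μ + b • ν))
      = (a : ℂ) • ((-(T⁻¹) : ℂ) • (H - muDotQ Q μ))
        + (b : ℂ) • ((-(T⁻¹) : ℂ) • (H - muDotQ Q ν)) := by
    have hab' : (a : ℂ) + (b : ℂ) = 1 := by exact_mod_cast hab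
    conv_lhs => rw [hmulin, show H = (a : ℂ) • H + (b : ℂ) • H by
      rw [← add_smul, hab', one_smul]]
    module
  -- the Gibbs state of the midpoint
  have hKb := hKherm (a • μ + b • ν)
  have hZpos : (0 : ℝ) < ∑ k, Real.exp (hKb.eigenvalues k) :=
    Finset.sum_pos (fun k _ => Real.exp_pos _) Finset.univ_nonempty
  set p : Fin d → ℝ :=
    fun j => Real.exp (hKb.eigenvalues j) / ∑ k, Real.exp (hKb.eigenvalues k) with hpdef
  have hp : ∀ j, 0 ≤ p j := fun j => div_nonneg (Real.exp_pos _).le hZpos.le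
  have hp1 : ∑ j, p j = 1 := by
    rw [hpdef, ← Finset.sum_div, div_self (ne_of_gt hZpos)]
  -- affinity of the trace term
  have hAff : ∀ ρ : Matrix (Fin d) (Fin d) ℂ,
      (Matrix.trace (ρ * ((-(T⁻¹) : ℂ) • (H - muDotQ Q (a • μ + b • ν))))).re
        = a * (Matrix.trace (ρ * ((-(T⁻¹) : ℂ) • (H - muDotQ Q μ)))).re
          + b * (Matrix.trace (ρ * ((-(T⁻¹) : ℂ) • (H - muDotQ Q ν)))).re := fun ρ => by
    rw [hKaff, Matrix.mul_add, Matrix.trace_add, Matrix.mul_smul, Matrix.mul_smul,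
      Matrix.trace_smul, Matrix.trace_smul]
    simp [Complex.add_re, smul_eq_mul, Complex.re_ofReal_mul]
  -- equality at the midpoint and Klein inequalities at the ends
  have hEq := gibbs_attains hKb hdne
  have hIμ := klein (hKherm μ) hKb.eigenvectorUnitary.2 p hp hp1
  have hIν := klein (hKherm ν) hKb.eigenvectorUnitary.2 p hp hp1
  have hAffρ := hAff ((hKb.eigenvectorUnitary : Matrix (Fin d) (Fin d) ℂ) *
      Matrix.diagonal (fun j => (p j : ℂ)) *
      star (hKb.eigenvectorUnitary : Matrix (Fin d) (Fin d) ℂ))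
  -- abbreviate the real quantities
  set S : ℝ := ∑ j, p j * Real.log (p j) with hS
  set X : ℝ := (Matrix.trace (((hKb.eigenvectorUnitary : Matrix (Fin d) (Fin d) ℂ) *
      Matrix.diagonal (fun j => (p j : ℂ)) *
      star (hKb.eigenvectorUnitary : Matrix (Fin d) (Fin d) ℂ)) *
        ((-(T⁻¹) : ℂ) • (H - muDotQ Q μ)))).re with hX
  set Y : ℝ := (Matrix.trace (((hKb.eigenvectorUnitary : Matrix (Fin d) (Fin d) ℂ) *
      Matrix.diagonal (fun j => (p j : ℂ)) *
      star (hKb.eigenvectorUnitary : Matrix (Fin d) (Fin d) ℂ)) *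
        ((-(T⁻¹) : ℂ) • (H - muDotQ Q ν)))).re with hY
  have hZμ : partitionZ H Q T μ
      = (Matrix.trace (NormedSpace.exp ((-(T⁻¹) : ℂ) • (H - muDotQ Q μ)))).re := rfl
  have hZν : partitionZ H Q T ν
      = (Matrix.trace (NormedSpace.exp ((-(T⁻¹) : ℂ) • (H - muDotQ Q ν)))).re := rfl
  have hZb : partitionZ H Q T (a • μ + b • ν)
      = (Matrix.trace (NormedSpace.exp
          ((-(T⁻¹) : ℂ) • (H - muDotQ Q (a • μ + b • ν))))).re := rfl
  -- the log-convexity inequality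
  have hlog : Real.log (partitionZ H Q T (a • μ + b • ν))
      ≤ a * Real.log (partitionZ H Q T μ) + b * Real.log (partitionZ H Q T ν) := by
    have e1 : Real.log (partitionZ H Q T (a • μ + b • ν)) = a * X + b * Y - S := by
      rw [hZb, ← hEq, hAffρ]
    have e2 : a * X + b * Y - S = a * (X - S) + b * (Y - S) := by
      have : a * (X - S) + b * (Y - S) = a * X + b * Y - (a + b) * S := by ring
      rw [this, hab, one_mul]
    rw [e1, e2, hZμ, hZν]
    exact add_le_add (mul_le_mul_of_nonneg_left hIμ ha) (mul_le_mul_of_nonneg_left hIν hb)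
  -- linear part
  have hlin : ∑ i, (a • μ + b • ν) i * q i
      = a * ∑ i, μ i * q i + b * ∑ i, ν i * q i := by
    rw [Finset.mul_sum, Finset.mul_sum, ← Finset.sum_add_distrib]
    refine Finset.sum_congr rfl fun i _ => ?_
    simp only [Pi.add_apply, Pi.smul_apply, smul_eq_mul]
    ring
  rw [hlin]
  nlinarith [mul_le_mul_of_nonneg_left hlog hT.le]
end

section
/- Error analysis for free-energy-based energy estimation: let d ≥ 2, let ε_1, ε_2 > 0, set T := ε_1 / ln d, suppose the feasible set {ρ ∈ D_d : Tr[Q_i ρ] = q_i ∀ i ∈ [c]} is nonempty, let f(μ) := μ·q − T ln Z_T(μ), and suppose μ ∈ ℝ^c satisfies |F_T(Q,q) − f(μ)| ≤ ε_2. Then the estimate Ẽ := Tr[H ρ_T(μ)] + Σ_{i∈[c]} μ_i (q_i − Tr[Q_i ρ_T(μ)]) satisfies |E(Q,q) − Ẽ| ≤ 2ε_1 + ε_2. -/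
open Matrix MeasureTheory
open scoped ComplexOrder

section helpers
variable {n : Type*} [Fintype n] [DecidableEq n]

lemma trace_conj_diag (U : Matrix.unitaryGroup n ℂ) (v : n → ℂ) :
    Matrix.trace ((U : Matrix n n ℂ) * Matrix.diagonal v * star (U : Matrix n n ℂ)) = ∑ i, v i := by
  rw [Matrix.trace_mul_cycle]
  rw [Unitary.star_mul_self_of_mem U.2, Matrix.one_mul]
  exact Matrix.trace_diagonal v

lemma conj_diag_mul_conj_diag (U : Matrix.unitaryGroup n ℂ) (v w : n → ℂ) :
    ((U : Matrix n n ℂ) * Matrix.diagonal v * star (U : Matrix n n ℂ)) *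
      ((U : Matrix n n ℂ) * Matrix.diagonal w * star (U : Matrix n n ℂ))
      = (U : Matrix n n ℂ) * Matrix.diagonal (fun i => v i * w i) * star (U : Matrix n n ℂ) := by
  have h1 : star (U : Matrix n n ℂ) * ((U : Matrix n n ℂ) * Matrix.diagonal w * star (U : Matrix n n ℂ))
      = Matrix.diagonal w * star (U : Matrix n n ℂ) := by
    rw [← Matrix.mul_assoc, ← Matrix.mul_assoc, Unitary.star_mul_self_of_mem U.2, Matrix.one_mul]
  rw [Matrix.mul_assoc, h1, ← Matrix.mul_assoc, Matrix.mul_assoc (U : Matrix n n ℂ),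
    Matrix.diagonal_mul_diagonal]

lemma smul_conj_diag (U : Matrix.unitaryGroup n ℂ) (c : ℂ) (v : n → ℂ) :
    c • ((U : Matrix n n ℂ) * Matrix.diagonal v * star (U : Matrix n n ℂ))
      = (U : Matrix n n ℂ) * Matrix.diagonal (fun i => c * v i) * star (U : Matrix n n ℂ) := by
  rw [← Matrix.smul_mul, ← Matrix.mul_smul]
  congr 2
  ext i j
  by_cases h : i = j <;> simp [Matrix.diagonal_apply, h]

lemma exp_conj_unitary (U : Matrix.unitaryGroup n ℂ) (D : Matrix n n ℂ) :
    NormedSpace.exp ((U : Matrix n n ℂ) * D * star (U : Matrix n n ℂ))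
      = (U : Matrix n n ℂ) * NormedSpace.exp D * star (U : Matrix n n ℂ) := by
  have h := Matrix.exp_units_conj (Unitary.toUnits U) D
  have hc : ((Unitary.toUnits U : (Matrix n n ℂ)ˣ) : Matrix n n ℂ) = (U : Matrix n n ℂ) := rfl
  have hc' : (((Unitary.toUnits U)⁻¹ : (Matrix n n ℂ)ˣ) : Matrix n n ℂ) = star (U : Matrix n n ℂ) := rfl
  rw [hc, hc'] at h
  exact h
end helpers

section helpers2
variable {n : Type*} [Fintype n] [DecidableEq n]

lemma spectral_theorem'' {A : Matrix n n ℂ} (hA : A.IsHermitian) :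
    A = (hA.eigenvectorUnitary : Matrix n n ℂ) *
      Matrix.diagonal (fun i => (hA.eigenvalues i : ℂ)) *
      star (hA.eigenvectorUnitary : Matrix n n ℂ) := by
  convert hA.spectral_theorem using 2
  exact (Unitary.conjStarAlgAut_apply _ _).symm

lemma sum_eigenvalues_eq_trace_re {A : Matrix n n ℂ} (hA : A.IsHermitian) :
    ∑ i, hA.eigenvalues i = (Matrix.trace A).re := by
  conv_rhs => rw [spectral_theorem'' hA]
  rw [trace_conj_diag]
  simp

lemma sum_eigenvalues_cfc {A : Matrix n n ℂ} (hA : A.IsHermitian) (f : ℝ → ℝ) :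
    (Matrix.trace (cfc f A)).re = ∑ i, f (hA.eigenvalues i) := by
  rw [hA.cfc_eq, Matrix.IsHermitian.cfc, Unitary.conjStarAlgAut_apply, trace_conj_diag]
  simp

set_option linter.unusedSectionVars false

lemma sum_mul_log_nonpos {p : n → ℝ} (h1 : ∀ i, 0 ≤ p i) (h2 : ∑ i, p i = 1) :
    0 ≤ -∑ i, p i * Real.log (p i) := by
  rw [neg_nonneg]
  apply Finset.sum_nonpos
  intro i _
  have hle : p i ≤ 1 := by
    calc p i ≤ ∑ j, p j := Finset.single_le_sum (fun j _ => h1 j) (Finset.mem_univ i)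
    _ = 1 := h2
  exact mul_nonpos_of_nonneg_of_nonpos (h1 i) (Real.log_nonpos (h1 i) hle)

lemma neg_sum_mul_log_le_log_card [Nonempty n] {p : n → ℝ}
    (h1 : ∀ i, 0 ≤ p i) (h2 : ∑ i, p i = 1) :
    -∑ i, p i * Real.log (p i) ≤ Real.log (Fintype.card n) := by
  set D : ℝ := (Fintype.card n : ℝ) with hD
  have hDpos : 0 < D := Nat.cast_pos.mpr Fintype.card_pos
  have key : ∀ i, -(p i * Real.log (p i)) - p i * Real.log D ≤ 1 / D - p i := by
    intro i
    rcases eq_or_lt_of_le (h1 i) with h | h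
    · simp [← h]
      positivity
    · have hxD : 0 < p i * D := mul_pos h hDpos
      have hlog : Real.log (1 / (p i * D)) ≤ 1 / (p i * D) - 1 :=
        Real.log_le_sub_one_of_pos (by positivity)
      have hexp : Real.log (1 / (p i * D)) = -Real.log (p i) - Real.log D := by
        rw [one_div, Real.log_inv, Real.log_mul (ne_of_gt h) (ne_of_gt hDpos)]
        ring
      have hmul := mul_le_mul_of_nonneg_left hlog (le_of_lt h)
      rw [hexp] at hmul
      have heq : p i * (1 / (p i * D) - 1) = 1 / D - p i := by
        field_simp
      rw [heq] at hmul
      nlinarith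
  have hsum : ∑ i, (-(p i * Real.log (p i)) - p i * Real.log D) ≤ ∑ i, (1 / D - p i) :=
    Finset.sum_le_sum fun i _ => key i
  have hL : ∑ i, (-(p i * Real.log (p i)) - p i * Real.log D)
      = -∑ i, p i * Real.log (p i) - Real.log D := by
    rw [Finset.sum_sub_distrib, ← Finset.sum_neg_distrib, ← Finset.sum_mul, h2]
    simp
  have hR : ∑ i, (1 / D - p i) = D * (1 / D) - 1 := by
    rw [Finset.sum_sub_distrib, h2, Finset.sum_const, Finset.card_univ]
    simp [hD, nsmul_eq_mul]
  have hD1 : D * (1 / D) = 1 := by field_simp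
  rw [hL, hR, hD1] at hsum
  linarith
end helpers2

section helpers3
variable {n : Type*} [Fintype n] [DecidableEq n]

lemma unitary_entry_abs_le_one (U : Matrix.unitaryGroup n ℂ) (i k : n) :
    ‖(U : Matrix n n ℂ) i k‖ ≤ 1 := by
  have h1 : (star (U : Matrix n n ℂ) * (U : Matrix n n ℂ)) k k = 1 := by
    rw [Unitary.star_mul_self_of_mem U.2]
    simp [Matrix.one_apply]
  rw [Matrix.mul_apply] at h1
  have h2 : ∀ j, star (U : Matrix n n ℂ) k j * (U : Matrix n n ℂ) j k
      = ((‖(U : Matrix n n ℂ) j k‖)^2 : ℝ) := by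
    intro j
    rw [Matrix.star_apply, Complex.star_def, ← Complex.normSq_eq_norm_sq, mul_comm,
      Complex.mul_conj]
  rw [Finset.sum_congr rfl (fun j _ => h2 j)] at h1
  have h3 : ∑ j, (‖(U : Matrix n n ℂ) j k‖)^2 = 1 := by
    exact_mod_cast h1
  have h4 : (‖(U : Matrix n n ℂ) i k‖)^2 ≤ 1 := by
    rw [← h3]
    exact Finset.single_le_sum (f := fun j => (‖(U : Matrix n n ℂ) j k‖)^2)
      (fun j _ => sq_nonneg _) (Finset.mem_univ i)
  nlinarith [norm_nonneg ((U : Matrix n n ℂ) i k)]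

lemma density_eigenvalues_sum {σ : Matrix n n ℂ} (hσ : IsDensityMatrix σ) :
    ∑ i, hσ.1.1.eigenvalues i = 1 := by
  rw [sum_eigenvalues_eq_trace_re hσ.1.1, hσ.2]
  simp

lemma density_entry_abs_le_one {σ : Matrix n n ℂ} (hσ : IsDensityMatrix σ) (i j : n) :
    ‖σ i j‖ ≤ 1 := by
  have hherm := hσ.1.1
  have hev := hσ.1.eigenvalues_nonneg
  set U := hherm.eigenvectorUnitary with hU
  have hentry : σ i j = ∑ k, (U : Matrix n n ℂ) i k * (hherm.eigenvalues k : ℂ)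
      * star ((U : Matrix n n ℂ) j k) := by
    conv_lhs => rw [spectral_theorem'' hherm]
    rw [Matrix.mul_apply]
    congr 1; ext k
    rw [Matrix.mul_diagonal, Matrix.star_apply]
  rw [hentry]
  calc ‖∑ k, (U : Matrix n n ℂ) i k * (hherm.eigenvalues k : ℂ)
      * star ((U : Matrix n n ℂ) j k)‖
      ≤ ∑ k, ‖(U : Matrix n n ℂ) i k * (hherm.eigenvalues k : ℂ)
        * star ((U : Matrix n n ℂ) j k)‖ := norm_sum_le _ _
    _ ≤ ∑ k, hherm.eigenvalues k := by
        apply Finset.sum_le_sum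
        intro k _
        rw [norm_mul, norm_mul]
        have e1 := unitary_entry_abs_le_one U i k
        have e2 : ‖star ((U : Matrix n n ℂ) j k)‖ ≤ 1 := by
          rw [show star ((U : Matrix n n ℂ) j k)
              = (starRingEnd ℂ) ((U : Matrix n n ℂ) j k) from rfl, Complex.norm_conj]
          exact unitary_entry_abs_le_one U j k
        have e3 : ‖(hherm.eigenvalues k : ℂ)‖ = hherm.eigenvalues k := by
          rw [Complex.norm_real, Real.norm_of_nonneg (hev k)]
        rw [e3]
        nlinarith [norm_nonneg ((U : Matrix n n ℂ) i k),
          norm_nonneg (star ((U : Matrix n n ℂ) j k)), hev k,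
          mul_nonneg (sub_nonneg.mpr e1) (hev k),
          mul_nonneg (mul_nonneg (norm_nonneg ((U : Matrix n n ℂ) i k)) (hev k))
            (sub_nonneg.mpr e2)]
    _ = 1 := density_eigenvalues_sum hσ

lemma density_trace_re_bound (M : Matrix n n ℂ) {σ : Matrix n n ℂ} (hσ : IsDensityMatrix σ) :
    |(Matrix.trace (M * σ)).re| ≤ ∑ i, ∑ j, ‖M i j‖ := by
  have h1 : |(Matrix.trace (M * σ)).re| ≤ ‖Matrix.trace (M * σ)‖ :=
    Complex.abs_re_le_norm _
  refine h1.trans ?_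
  unfold Matrix.trace
  calc ‖∑ i, (M * σ).diag i‖ ≤ ∑ i, ‖(M * σ) i i‖ :=
      norm_sum_le _ _
    _ ≤ ∑ i, ∑ j, ‖M i j‖ := by
        apply Finset.sum_le_sum
        intro i _
        rw [Matrix.mul_apply]
        calc ‖∑ j, M i j * σ j i‖ ≤ ∑ j, ‖M i j * σ j i‖ :=
            norm_sum_le _ _
          _ ≤ ∑ j, ‖M i j‖ := by
              apply Finset.sum_le_sum
              intro j _
              rw [norm_mul]
              have := density_entry_abs_le_one hσ j i
              nlinarith [norm_nonneg (M i j), norm_nonneg (σ j i)]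

lemma vnEntropy_eq {σ : Matrix n n ℂ} (hσ : σ.IsHermitian) :
    vnEntropy σ = -∑ i, hσ.eigenvalues i * Real.log (hσ.eigenvalues i) := by
  rw [vnEntropy, dif_pos hσ]

lemma vnEntropy_nonneg {σ : Matrix n n ℂ} (hσ : IsDensityMatrix σ) : 0 ≤ vnEntropy σ := by
  rw [vnEntropy_eq hσ.1.1]
  exact sum_mul_log_nonpos hσ.1.eigenvalues_nonneg (density_eigenvalues_sum hσ)

lemma vnEntropy_le_log_card [Nonempty n] {σ : Matrix n n ℂ} (hσ : IsDensityMatrix σ) :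
    vnEntropy σ ≤ Real.log (Fintype.card n) := by
  rw [vnEntropy_eq hσ.1.1]
  exact neg_sum_mul_log_le_log_card hσ.1.eigenvalues_nonneg (density_eigenvalues_sum hσ)
end helpers3

section gibbs
variable {n : Type*} [Fintype n] [DecidableEq n]

lemma gibbs_all [Nonempty n] {A G ρ : Matrix n n ℂ} {Z T : ℝ}
    (hA : A.IsHermitian) (hT : 0 < T)
    (hG : G = NormedSpace.exp ((-(T⁻¹) : ℂ) • A))
    (hZ : Z = (Matrix.trace G).re) (hρ : ρ = ((Z : ℂ))⁻¹ • G) :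
    0 < Z ∧ 0 ≤ vnEntropy ρ ∧ vnEntropy ρ ≤ Real.log (Fintype.card n) ∧
      (Matrix.trace (A * ρ)).re = T * vnEntropy ρ - T * Real.log Z := by
  set U := hA.eigenvectorUnitary with hU
  set a := hA.eigenvalues with ha
  have hsmul : (-(T⁻¹) : ℂ) • A
      = (U : Matrix n n ℂ) * Matrix.diagonal (fun i => ((-T⁻¹ * a i : ℝ) : ℂ))
        * star (U : Matrix n n ℂ) := by
    conv_lhs => rw [spectral_theorem'' hA]
    rw [smul_conj_diag]
    have hfun : (fun i => (-(T⁻¹) : ℂ) * ((a i : ℝ) : ℂ))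
        = fun i => ((-T⁻¹ * a i : ℝ) : ℂ) := by
      funext i
      push_cast
      ring
    rw [hfun]
  have hGeq : G = (U : Matrix n n ℂ)
      * Matrix.diagonal (fun i => ((Real.exp (-T⁻¹ * a i) : ℝ) : ℂ))
      * star (U : Matrix n n ℂ) := by
    rw [hG, hsmul, exp_conj_unitary U, Matrix.exp_diagonal]
    have hfun : NormedSpace.exp (fun i => ((-T⁻¹ * a i : ℝ) : ℂ))
        = fun i => ((Real.exp (-T⁻¹ * a i) : ℝ) : ℂ) := by
      funext i
      rw [Pi.coe_exp, ← Complex.exp_eq_exp_ℂ, Complex.ofReal_exp]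
    rw [hfun]
  set E : n → ℝ := fun i => Real.exp (-T⁻¹ * a i) with hE
  have hZeq : Z = ∑ i, E i := by
    rw [hZ, hGeq, trace_conj_diag, Complex.re_sum]
    exact Finset.sum_congr rfl (fun i _ => Complex.ofReal_re _)
  have hZpos : 0 < Z := by
    rw [hZeq]
    exact Finset.sum_pos (fun i _ => Real.exp_pos _) Finset.univ_nonempty
  set p : n → ℝ := fun i => Z⁻¹ * E i with hp
  have hppos : ∀ i, 0 < p i := fun i => mul_pos (inv_pos.mpr hZpos) (Real.exp_pos _)
  have hpsum : ∑ i, p i = 1 := by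
    rw [hp, ← Finset.mul_sum, ← hZeq]
    field_simp
  have hρeq : ρ = (U : Matrix n n ℂ) * Matrix.diagonal (fun i => ((p i : ℝ) : ℂ))
      * star (U : Matrix n n ℂ) := by
    rw [hρ, hGeq, smul_conj_diag]
    have hfun : (fun i => ((Z : ℂ))⁻¹ * ((Real.exp (-T⁻¹ * a i) : ℝ) : ℂ))
        = fun i => ((p i : ℝ) : ℂ) := by
      funext i
      show ((Z : ℂ))⁻¹ * ((Real.exp (-T⁻¹ * a i) : ℝ) : ℂ)
        = ((Z⁻¹ * Real.exp (-T⁻¹ * a i) : ℝ) : ℂ)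
      push_cast
      ring
    rw [hfun]
  have hρcfc : ρ = cfc (fun x => Z⁻¹ * Real.exp (-T⁻¹ * x)) A := by
    rw [hA.cfc_eq, Matrix.IsHermitian.cfc, hρeq]
    congr 1
  have hAsa : IsSelfAdjoint A := hA
  have hρherm : ρ.IsHermitian := by
    rw [hρcfc]
    exact (cfc_predicate (fun x => Z⁻¹ * Real.exp (-T⁻¹ * x)) A : IsSelfAdjoint _)
  have hS : vnEntropy ρ = -∑ i, p i * Real.log (p i) := by
    rw [vnEntropy_eq hρherm]
    congr 1
    have e1 : (Matrix.trace (cfc (fun x => x * Real.log x) ρ)).re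
        = ∑ i, hρherm.eigenvalues i * Real.log (hρherm.eigenvalues i) :=
      sum_eigenvalues_cfc hρherm (fun x => x * Real.log x)
    have e2 : cfc (fun x => x * Real.log x) ρ
        = cfc ((fun x => x * Real.log x) ∘ (fun x => Z⁻¹ * Real.exp (-T⁻¹ * x))) A := by
      rw [hρcfc, ← cfc_comp (fun x => x * Real.log x) (fun x => Z⁻¹ * Real.exp (-T⁻¹ * x)) A
        hAsa ((Matrix.finite_real_spectrum.image _).continuousOn _)
        (Matrix.finite_real_spectrum.continuousOn _)]
    have e3 : (Matrix.trace (cfc ((fun x => x * Real.log x)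
          ∘ (fun x => Z⁻¹ * Real.exp (-T⁻¹ * x))) A)).re
        = ∑ i, ((fun x => x * Real.log x) ∘ (fun x => Z⁻¹ * Real.exp (-T⁻¹ * x))) (a i) :=
      sum_eigenvalues_cfc hA _
    rw [← e1, e2, e3]
    rfl
  have htr : (Matrix.trace (A * ρ)).re = ∑ i, a i * p i := by
    conv_lhs => rw [spectral_theorem'' hA, hρeq, conj_diag_mul_conj_diag, trace_conj_diag]
    rw [Complex.re_sum]
    simp [← Complex.ofReal_mul]
    rfl
  have hlog : ∀ i, Real.log (p i) = -Real.log Z + (-T⁻¹ * a i) := by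
    intro i
    have hpi : p i = Z⁻¹ * Real.exp (-T⁻¹ * a i) := rfl
    rw [hpi, Real.log_mul (inv_ne_zero hZpos.ne') (Real.exp_ne_zero _), Real.log_inv,
      Real.log_exp]
  have hSval : vnEntropy ρ = Real.log Z + T⁻¹ * ∑ i, a i * p i := by
    rw [hS]
    have hterm : ∀ i, p i * Real.log (p i) = -(Real.log Z * p i) - T⁻¹ * (a i * p i) := by
      intro i
      rw [hlog i]
      ring
    rw [Finset.sum_congr rfl (fun i _ => hterm i), Finset.sum_sub_distrib,
      Finset.sum_neg_distrib, ← Finset.mul_sum, ← Finset.mul_sum, ← hZeq,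
      inv_mul_cancel₀ hZpos.ne', Finset.mul_sum]
    ring
  refine ⟨hZpos, ?_, ?_, ?_⟩
  · rw [hS]
    exact sum_mul_log_nonpos (fun i => (hppos i).le) hpsum
  · rw [hS]
    exact neg_sum_mul_log_le_log_card (fun i => (hppos i).le) hpsum
  · rw [htr, hSval]
    field_simp
    ring
end gibbs

section final_helpers
variable {d c : ℕ}

lemma muDotQ_isHermitian (Q : Fin c → Matrix (Fin d) (Fin d) ℂ)
    (hQ : ∀ i, (Q i).IsHermitian) (μ : Fin c → ℝ) : (muDotQ Q μ).IsHermitian := by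
  unfold muDotQ
  unfold Matrix.IsHermitian
  rw [Matrix.conjTranspose_sum]
  exact Finset.sum_congr rfl fun i _ => by
    rw [Matrix.conjTranspose_smul, (hQ i).eq, Complex.star_def, Complex.conj_ofReal]

lemma trace_A_mul (H : Matrix (Fin d) (Fin d) ℂ) (Q : Fin c → Matrix (Fin d) (Fin d) ℂ)
    (μ : Fin c → ℝ) (ρ : Matrix (Fin d) (Fin d) ℂ) :
    (Matrix.trace ((H - muDotQ Q μ) * ρ)).re
      = (Matrix.trace (H * ρ)).re - ∑ i, μ i * (Matrix.trace (Q i * ρ)).re := by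
  rw [Matrix.sub_mul, Matrix.trace_sub]
  have h : Matrix.trace (muDotQ Q μ * ρ) = ∑ i, (μ i : ℂ) * Matrix.trace (Q i * ρ) := by
    unfold muDotQ
    rw [Matrix.sum_mul, Matrix.trace_sum]
    exact Finset.sum_congr rfl fun i _ => by rw [Matrix.smul_mul, Matrix.trace_smul, smul_eq_mul]
  rw [Complex.sub_re, h, Complex.re_sum]
  congr 1
  exact Finset.sum_congr rfl fun i _ => by simp [Complex.mul_re]
end final_helpers

/-- error analysis for free-energy-based energy estimation. -/
theorem stmt_16 (d c : ℕ) (hd : 2 ≤ d)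
    (H : Matrix (Fin d) (Fin d) ℂ) (hH : H.IsHermitian)
    (Q : Fin c → Matrix (Fin d) (Fin d) ℂ) (hQ : ∀ i, (Q i).IsHermitian)
    (q : Fin c → ℝ) (ε₁ ε₂ : ℝ) (hε₁ : 0 < ε₁) (hε₂ : 0 < ε₂)
    (T : ℝ) (hTdef : T = ε₁ / Real.log d)
    (hfeas : ∃ ρ : Matrix (Fin d) (Fin d) ℂ, IsDensityMatrix ρ ∧
      ∀ i, Matrix.trace (Q i * ρ) = (q i : ℂ))
    (μ : Fin c → ℝ)
    (hμ : |sInf {x : ℝ | ∃ ρ : Matrix (Fin d) (Fin d) ℂ, IsDensityMatrix ρ ∧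
        (∀ i, Matrix.trace (Q i * ρ) = (q i : ℂ)) ∧
        x = (Matrix.trace (H * ρ)).re - T * vnEntropy ρ}
      - (∑ i, μ i * q i - T * Real.log (partitionZ H Q T μ))| ≤ ε₂) :
    |sInf {x : ℝ | ∃ ρ : Matrix (Fin d) (Fin d) ℂ, IsDensityMatrix ρ ∧
        (∀ i, Matrix.trace (Q i * ρ) = (q i : ℂ)) ∧ x = (Matrix.trace (H * ρ)).re}
      - ((Matrix.trace (H * thermalState H Q T μ)).re
        + ∑ i, μ i * (q i - (Matrix.trace (Q i * thermalState H Q T μ)).re))|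
    ≤ 2 * ε₁ + ε₂ := by
  have hd1 : (1 : ℝ) < d := by
    have : (2 : ℝ) ≤ d := by exact_mod_cast hd
    linarith
  have hlogd : 0 < Real.log d := Real.log_pos hd1
  have hT : 0 < T := hTdef ▸ div_pos hε₁ hlogd
  have hTlog : T * Real.log d = ε₁ := by
    rw [hTdef]; field_simp
  have hdpos : 0 < d := by omega
  have hne : Nonempty (Fin d) := ⟨⟨0, hdpos⟩⟩
  have hMu : (muDotQ Q μ).IsHermitian := muDotQ_isHermitian Q hQ μ
  have hA : (H - muDotQ Q μ).IsHermitian := hH.sub hMu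
  obtain ⟨hZpos, hS0, hS1, hid⟩ :=
    gibbs_all (A := H - muDotQ Q μ) (G := NormedSpace.exp ((-(T⁻¹) : ℂ) • (H - muDotQ Q μ)))
      (Z := partitionZ H Q T μ) (ρ := thermalState H Q T μ) hA hT rfl rfl rfl
  rw [Fintype.card_fin] at hS1
  -- the estimate identity
  have hEst : (Matrix.trace (H * thermalState H Q T μ)).re
      + ∑ i, μ i * (q i - (Matrix.trace (Q i * thermalState H Q T μ)).re)
      = (∑ i, μ i * q i - T * Real.log (partitionZ H Q T μ))
        + T * vnEntropy (thermalState H Q T μ) := by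
    have h1 := trace_A_mul H Q μ (thermalState H Q T μ)
    rw [hid] at h1
    have h2 : ∑ i, μ i * (q i - (Matrix.trace (Q i * thermalState H Q T μ)).re)
        = ∑ i, μ i * q i - ∑ i, μ i * (Matrix.trace (Q i * thermalState H Q T μ)).re := by
      rw [← Finset.sum_sub_distrib]
      exact Finset.sum_congr rfl fun i _ => by ring
    rw [h2]
    linarith
  -- the sets
  set SE := {x : ℝ | ∃ ρ : Matrix (Fin d) (Fin d) ℂ, IsDensityMatrix ρ ∧
      (∀ i, Matrix.trace (Q i * ρ) = (q i : ℂ)) ∧ x = (Matrix.trace (H * ρ)).re} with hSEdef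
  set SF := {x : ℝ | ∃ ρ : Matrix (Fin d) (Fin d) ℂ, IsDensityMatrix ρ ∧
      (∀ i, Matrix.trace (Q i * ρ) = (q i : ℂ)) ∧
      x = (Matrix.trace (H * ρ)).re - T * vnEntropy ρ} with hSFdef
  obtain ⟨ρ₀, hρ₀d, hρ₀f⟩ := hfeas
  have hSEne : SE.Nonempty := ⟨_, ρ₀, hρ₀d, hρ₀f, rfl⟩
  have hSFne : SF.Nonempty := ⟨_, ρ₀, hρ₀d, hρ₀f, rfl⟩
  set C := ∑ i, ∑ j, ‖H i j‖ with hC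
  have hSEbdd : BddBelow SE := by
    refine ⟨-C, ?_⟩
    rintro x ⟨ρ, hρd, hρf, rfl⟩
    exact neg_le_of_abs_le (density_trace_re_bound H hρd)
  have hSFbdd : BddBelow SF := by
    refine ⟨-C - T * Real.log d, ?_⟩
    rintro x ⟨ρ, hρd, hρf, rfl⟩
    have h1 := neg_le_of_abs_le (density_trace_re_bound H hρd)
    have h2 := vnEntropy_le_log_card (n := Fin d) hρd
    rw [Fintype.card_fin] at h2
    have h3 := mul_le_mul_of_nonneg_left h2 hT.le
    linarith
  have hFE : sInf SF ≤ sInf SE := by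
    apply le_csInf hSEne
    rintro x ⟨ρ, hρd, hρf, rfl⟩
    have h1 : sInf SF ≤ (Matrix.trace (H * ρ)).re - T * vnEntropy ρ :=
      csInf_le hSFbdd ⟨ρ, hρd, hρf, rfl⟩
    have h2 := mul_nonneg hT.le (vnEntropy_nonneg hρd)
    linarith
  have hEF : sInf SE ≤ sInf SF + ε₁ := by
    have key : sInf SE - ε₁ ≤ sInf SF := by
      apply le_csInf hSFne
      rintro x ⟨ρ, hρd, hρf, rfl⟩
      have h1 : sInf SE ≤ (Matrix.trace (H * ρ)).re := csInf_le hSEbdd ⟨ρ, hρd, hρf, rfl⟩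
      have h2 := vnEntropy_le_log_card (n := Fin d) hρd
      rw [Fintype.card_fin] at h2
      have h3 := mul_le_mul_of_nonneg_left h2 hT.le
      linarith
    linarith
  have hμ' := abs_le.mp hμ
  have hTS0 : 0 ≤ T * vnEntropy (thermalState H Q T μ) := mul_nonneg hT.le hS0
  have hTS1 : T * vnEntropy (thermalState H Q T μ) ≤ ε₁ := by
    have := mul_le_mul_of_nonneg_left hS1 hT.le
    linarith
  rw [hEst, abs_le]
  constructor <;> [skip; skip] <;>
    [linarith [hμ'.1, hμ'.2]; linarith [hμ'.1, hμ'.2]]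
end
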